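/- arXiv:1606.06633 — 3 statements merged into one kernel-verified Lean document; each statement's English description precedes it below -/
import Mathlib

section
/- For every T > 0, the random variable sup_{t ∈ [0,T]} (N_{nt}/(ν√n))^{1/2} · |μ̂_{nt} − μ| converges to 0 in probability as n → ∞ (with the convention that the term is 0 on the event N_{nt} = 0). -/
open MeasureTheory ProbabilityTheory Filter Topology

/-- Partial sum `S_k = ξ_1 + ⋯ + ξ_k` of the life times (1-indexed), `S_0 = 0`. -/
noncomputable def pSum {Ω : Type*} (ξ : ℕ → Ω → ℝ) (k : ℕ) (ω : Ω) : ℝ :=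
  ∑ i ∈ Finset.Icc 1 k, ξ i ω

/-- Counting process `N_t = max {k ≥ 0 : S_k ≤ t}`. -/
noncomputable def cnt {Ω : Type*} (ξ : ℕ → Ω → ℝ) (t : ℝ) (ω : Ω) : ℕ :=
  sSup {k : ℕ | pSum ξ k ω ≤ t}

/-- Empirical mean `μ̂_t = (1/N_t) ∑_{i=1}^{N_t} ξ_i` of the life times up to time `t`
(equal to `0` by the division-by-zero convention if `N_t = 0`). -/
noncomputable def muHat {Ω : Type*} (ξ : ℕ → Ω → ℝ) (t : ℝ) (ω : Ω) : ℝ :=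
  pSum ξ (cnt ξ t ω) ω / (cnt ξ t ω)

open scoped ENNReal NNReal

section AuxLemmas

lemma aux_abs_pow_le (x : ℝ) {j : ℕ} (hj : j ≤ 4) : |x| ^ j ≤ 1 + x ^ 4 := by
  have h4 : |x| ^ 4 = x ^ 4 := by
    rw [← abs_pow]; exact abs_of_nonneg (by positivity)
  rcases le_total |x| 1 with h | h
  · have h1 : |x| ^ j ≤ 1 := pow_le_one₀ (abs_nonneg x) h
    nlinarith [pow_nonneg (abs_nonneg x) 4, h4]
  · have h2 : |x| ^ j ≤ |x| ^ 4 := pow_le_pow_right₀ h hj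
    nlinarith

lemma aux_integrable_pow {Ω : Type*} [MeasurableSpace Ω] (P : Measure Ω) [IsFiniteMeasure P]
    {f : Ω → ℝ} (hf : MemLp f 4 P) (j : ℕ) (hj : j ≤ 4) :
    Integrable (fun ω => f ω ^ j) P := by
  have h4 : Integrable (fun ω => f ω ^ 4) P := by
    have h := hf.integrable_norm_rpow (by norm_num) (by norm_num)
    have heq : (fun ω => ‖f ω‖ ^ (4 : ℝ≥0∞).toReal) = fun ω => f ω ^ 4 := by
      funext ω
      rw [show ((4 : ℝ≥0∞).toReal) = ((4 : ℕ) : ℝ) by norm_num, Real.rpow_natCast,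
        Real.norm_eq_abs, ← abs_pow]
      exact abs_of_nonneg (by positivity)
    rwa [heq] at h
  refine ((integrable_const (1 : ℝ)).add h4).mono'
    ((hf.aestronglyMeasurable.aemeasurable.pow_const j).aestronglyMeasurable) ?_
  refine Eventually.of_forall fun ω => ?_
  rw [Real.norm_eq_abs, abs_pow]
  exact aux_abs_pow_le (f ω) hj

lemma aux_chebyshev {Ω : Type*} [MeasurableSpace Ω] (P : Measure Ω) [IsProbabilityMeasure P]
    {Z : Ω → ℝ} (hint : Integrable (fun ω => Z ω ^ 4) P) {θ : ℝ} (hθ : 0 < θ) :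
    P {ω | θ ≤ Z ω ^ 4} ≤ ENNReal.ofReal ((∫ ω, Z ω ^ 4 ∂P) / θ) := by
  have hnn : 0 ≤ᵐ[P] fun ω => Z ω ^ 4 := Eventually.of_forall fun ω => by positivity
  have h := mul_meas_ge_le_integral_of_nonneg hnn hint θ
  have hfin : P {ω | θ ≤ Z ω ^ 4} ≠ ⊤ := measure_ne_top _ _
  rw [← ENNReal.ofReal_toReal hfin]
  apply ENNReal.ofReal_le_ofReal
  rw [le_div_iff₀ hθ]
  rw [measureReal_def] at h
  linarith

lemma aux_add_pow4 (x y : ℝ) : (x + y) ^ 4 ≤ 8 * (x ^ 4 + y ^ 4) := by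
  nlinarith [sq_nonneg (x - y), sq_nonneg (x + y), sq_nonneg (x ^ 2 - y ^ 2),
    sq_nonneg (x ^ 2 + y ^ 2), sq_nonneg (x * y), sq_nonneg x, sq_nonneg y]

lemma aux_moments {Ω : Type*} [MeasurableSpace Ω] (P : Measure Ω) [IsProbabilityMeasure P]
    (X : ℕ → Ω → ℝ) (hXmeas : ∀ i, Measurable (X i))
    (hXindep : iIndepFun X P)
    (hXmem : ∀ i, MemLp (X i) 4 P)
    (σ2 κ : ℝ)
    (hzero : ∀ i, ∫ ω, X i ω ∂P = 0)
    (hmom2 : ∀ i, ∫ ω, X i ω ^ 2 ∂P = σ2)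
    (hmom4 : ∀ i, ∫ ω, X i ω ^ 4 ∂P = κ)
    (s : Finset ℕ) :
    (∫ ω, (∑ i ∈ s, X i ω) ∂P = 0) ∧
    (∫ ω, (∑ i ∈ s, X i ω) ^ 2 ∂P = s.card * σ2) ∧
    (∫ ω, (∑ i ∈ s, X i ω) ^ 4 ∂P ≤ (3 * σ2 ^ 2 + κ) * (s.card : ℝ) ^ 2) := by
  have hσ2 : 0 ≤ σ2 := (hmom2 0) ▸ integral_nonneg (fun ω => by positivity)
  have hκ : 0 ≤ κ := (hmom4 0) ▸ integral_nonneg (fun ω => by positivity)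
  induction s using Finset.cons_induction with
  | empty => simp
  | cons a s ha ih =>
    obtain ⟨ih1, ih2, ih4⟩ := ih
    have hWmem : MemLp (fun ω => ∑ i ∈ s, X i ω) 4 P := by
      have h := memLp_finset_sum' s (fun (i:ℕ) (_ : i ∈ s) => hXmem i)
      rwa [show (∑ i ∈ s, X i) = fun ω => ∑ i ∈ s, X i ω from funext fun ω => by
        simp [Finset.sum_apply]] at h
    have hWint : ∀ j, j ≤ 4 → Integrable (fun ω => (∑ i ∈ s, X i ω) ^ j) P :=
      fun j hj => aux_integrable_pow P hWmem j hj
    have hYint : ∀ j, j ≤ 4 → Integrable (fun ω => X a ω ^ j) P :=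
      fun j hj => aux_integrable_pow P (hXmem a) j hj
    have hindep0 : IndepFun (fun ω => ∑ i ∈ s, X i ω) (X a) P := by
      have h := hXindep.indepFun_finsetSum_of_notMem hXmeas ha
      rwa [show (∑ i ∈ s, X i) = fun ω => ∑ i ∈ s, X i ω from funext fun ω => by
        simp [Finset.sum_apply]] at h
    have hprod : ∀ j l : ℕ, j ≤ 4 → l ≤ 4 →
        Integrable (fun ω => (∑ i ∈ s, X i ω) ^ j * X a ω ^ l) P ∧
        ∫ ω, (∑ i ∈ s, X i ω) ^ j * X a ω ^ l ∂P
          = (∫ ω, (∑ i ∈ s, X i ω) ^ j ∂P) * (∫ ω, X a ω ^ l ∂P) := by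
      intro j l hj hl
      have hind : IndepFun (fun ω => (∑ i ∈ s, X i ω) ^ j) (fun ω => X a ω ^ l) P :=
        hindep0.comp (measurable_id.pow_const j) (measurable_id.pow_const l)
      exact ⟨hind.integrable_mul (hWint j hj) (hYint l hl),
             hind.integral_fun_mul_eq_mul_integral (hWint j hj).aestronglyMeasurable
               (hYint l hl).aestronglyMeasurable⟩
    have hWint1 : Integrable (fun ω => ∑ i ∈ s, X i ω) P := by
      simpa using hWint 1 (by norm_num)
    have hYint1 : Integrable (X a) P := by simpa using hYint 1 (by norm_num)
    have hcard : ((Finset.cons a s ha).card : ℝ) = (s.card : ℝ) + 1 := by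
      rw [Finset.card_cons]; push_cast; ring
    refine ⟨?_, ?_, ?_⟩
    · rw [show (fun ω => ∑ i ∈ Finset.cons a s ha, X i ω)
          = fun ω => X a ω + ∑ i ∈ s, X i ω from funext fun ω => Finset.sum_cons ha]
      rw [integral_add hYint1 hWint1, hzero a, ih1]; ring
    · have hexp : (fun ω => (∑ i ∈ Finset.cons a s ha, X i ω) ^ 2)
          = fun ω => X a ω ^ 2 + (2 * ((∑ i ∈ s, X i ω) ^ 1 * X a ω ^ 1)
              + (∑ i ∈ s, X i ω) ^ 2) := by
        funext ω; rw [Finset.sum_cons]; ring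
      have h11 := hprod 1 1 (by norm_num) (by norm_num)
      have hI2a : Integrable (fun ω => 2 * ((∑ i ∈ s, X i ω) ^ 1 * X a ω ^ 1)
          + (∑ i ∈ s, X i ω) ^ 2) P := ((h11.1).const_mul 2).add (hWint 2 (by norm_num))
      rw [hexp, integral_add (hYint 2 (by norm_num)) hI2a,
          integral_add ((h11.1).const_mul 2) (hWint 2 (by norm_num)),
          integral_const_mul _ _, h11.2, hmom2 a, ih2, hcard]
      simp only [pow_one] at *
      rw [ih1]; ring
    · have hexp : (fun ω => (∑ i ∈ Finset.cons a s ha, X i ω) ^ 4)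
          = fun ω => X a ω ^ 4 + (4 * ((∑ i ∈ s, X i ω) ^ 1 * X a ω ^ 3)
              + (6 * ((∑ i ∈ s, X i ω) ^ 2 * X a ω ^ 2)
              + (4 * ((∑ i ∈ s, X i ω) ^ 3 * X a ω ^ 1)
              + (∑ i ∈ s, X i ω) ^ 4))) := by
        funext ω; rw [Finset.sum_cons]; ring
      have h13 := hprod 1 3 (by norm_num) (by norm_num)
      have h22 := hprod 2 2 (by norm_num) (by norm_num)
      have h31 := hprod 3 1 (by norm_num) (by norm_num)
      have hIc : Integrable (fun ω => 4 * ((∑ i ∈ s, X i ω) ^ 3 * X a ω ^ 1)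
          + (∑ i ∈ s, X i ω) ^ 4) P := (h31.1.const_mul 4).add (hWint 4 (by norm_num))
      have hIb : Integrable (fun ω => 6 * ((∑ i ∈ s, X i ω) ^ 2 * X a ω ^ 2)
          + (4 * ((∑ i ∈ s, X i ω) ^ 3 * X a ω ^ 1) + (∑ i ∈ s, X i ω) ^ 4)) P :=
        (h22.1.const_mul 6).add hIc
      have hIa : Integrable (fun ω => 4 * ((∑ i ∈ s, X i ω) ^ 1 * X a ω ^ 3)
          + (6 * ((∑ i ∈ s, X i ω) ^ 2 * X a ω ^ 2)
          + (4 * ((∑ i ∈ s, X i ω) ^ 3 * X a ω ^ 1) + (∑ i ∈ s, X i ω) ^ 4))) P :=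
        (h13.1.const_mul 4).add hIb
      rw [hexp, integral_add (hYint 4 (by norm_num)) hIa,
          integral_add (h13.1.const_mul 4) hIb,
          integral_add (h22.1.const_mul 6) hIc,
          integral_add (h31.1.const_mul 4) (hWint 4 (by norm_num)),
          integral_const_mul _ _, integral_const_mul _ _, integral_const_mul _ _,
          h13.2, h22.2, h31.2, hmom4 a, hmom2 a, hcard]
      have hW1 : ∫ ω, (∑ i ∈ s, X i ω) ^ 1 ∂P = 0 := by simpa using ih1
      have hY1 : ∫ ω, X a ω ^ 1 ∂P = 0 := by simpa using hzero a
      rw [hW1, hY1, ih2]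
      have hn : (0 : ℝ) ≤ (s.card : ℝ) := Nat.cast_nonneg _
      nlinarith [ih4, sq_nonneg (s.card : ℝ), mul_nonneg hσ2 hn]

lemma aux_bc {Ω : Type*} [MeasurableSpace Ω] (P : Measure Ω) [IsProbabilityMeasure P]
    (M : ℕ → Ω → ℝ) (Cc : ℝ) (hCc : 0 ≤ Cc)
    (hM0 : ∀ ω, M 0 ω = 0)
    (hint4 : ∀ j k : ℕ, j ≤ k → Integrable (fun ω => (M k ω - M j ω) ^ 4) P)
    (hbound : ∀ j k : ℕ, j ≤ k → ∫ ω, (M k ω - M j ω) ^ 4 ∂P ≤ Cc * ((k - j : ℕ) : ℝ) ^ 2) :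
    ∀ᵐ ω ∂P, ∀ q : ℕ, ∀ᶠ k in atTop, (M k ω) ^ 4 ≤ (k : ℝ) ^ 3 / ((q : ℝ) + 1) := by
  have hMk4int : ∀ k, Integrable (fun ω => (M k ω) ^ 4) P := fun k => by
    simpa [hM0] using hint4 0 k (Nat.zero_le k)
  have hMk4 : ∀ k, ∫ ω, (M k ω) ^ 4 ∂P ≤ Cc * (k : ℝ) ^ 2 := fun k => by
    simpa [hM0] using hbound 0 k (Nat.zero_le k)
  set Bad : ℕ → ℕ → Set Ω := fun q r =>
    {ω | ∃ k ∈ Finset.Ico ((r + 1) ^ 2) ((r + 2) ^ 2),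
      (((r + 1) ^ 2 : ℕ) : ℝ) ^ 3 / ((q : ℝ) + 1) ≤ (M k ω) ^ 4} with hBadDef
  have hBadP : ∀ q r : ℕ, P (Bad q r) ≤
      ENNReal.ofReal (208 * ((q : ℝ) + 1) * Cc / (((r + 1 : ℕ)) : ℝ) ^ 2) := by
    intro q r
    set R : ℕ := r + 1 with hRdef
    have hRnat : 1 ≤ R := by omega
    have hR1 : (1 : ℝ) ≤ (R : ℝ) := by exact_mod_cast hRnat
    have hRpos : (0 : ℝ) < (R : ℝ) := by linarith
    have hRne : (R : ℝ) ≠ 0 := ne_of_gt hRpos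
    have hq1 : (0 : ℝ) < (q : ℝ) + 1 := by positivity
    have hcast : (((R ^ 2 : ℕ)) : ℝ) = (R : ℝ) ^ 2 := by push_cast; ring
    set θ : ℝ := (((R ^ 2 : ℕ)) : ℝ) ^ 3 / ((q : ℝ) + 1) / 16 with hθdef
    have hθeq : θ = (R : ℝ) ^ 6 / (((q : ℝ) + 1) * 16) := by
      rw [hθdef, hcast]; field_simp
    have hθpos : 0 < θ := by rw [hθeq]; positivity
    have hsub : Bad q r ⊆ {ω | θ ≤ (M (R ^ 2) ω) ^ 4} ∪
        ⋃ k ∈ Finset.Ico (R ^ 2) ((R + 1) ^ 2),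
          {ω | θ ≤ (M k ω - M (R ^ 2) ω) ^ 4} := by
      rintro ω ⟨k, hkmem, hk⟩
      have h8 := aux_add_pow4 (M (R ^ 2) ω) (M k ω - M (R ^ 2) ω)
      have h9 : M (R ^ 2) ω + (M k ω - M (R ^ 2) ω) = M k ω := by ring
      rw [h9] at h8
      by_cases h1 : θ ≤ (M (R ^ 2) ω) ^ 4
      · exact Or.inl h1
      · push_neg at h1
        have hkmem' : k ∈ Finset.Ico (R ^ 2) ((R + 1) ^ 2) := by
          simpa [hRdef, show r + 2 = R + 1 by omega] using hkmem
        refine Or.inr (Set.mem_biUnion hkmem' ?_)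
        have h16 : θ * 16 ≤ (M k ω) ^ 4 := by
          rw [hθdef, div_mul_cancel₀ _ (by norm_num : (16:ℝ) ≠ 0)]
          exact hk
        show θ ≤ (M k ω - M (R ^ 2) ω) ^ 4
        linarith
    have hA1 : P {ω | θ ≤ (M (R ^ 2) ω) ^ 4} ≤
        ENNReal.ofReal (16 * ((q : ℝ) + 1) * Cc / (R : ℝ) ^ 2) := by
      refine le_trans (aux_chebyshev P (hMk4int (R ^ 2)) hθpos) (ENNReal.ofReal_le_ofReal ?_)
      have hE : ∫ ω, (M (R ^ 2) ω) ^ 4 ∂P ≤ Cc * (R : ℝ) ^ 4 := by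
        have h := hMk4 (R ^ 2); rw [hcast] at h
        calc ∫ ω, (M (R ^ 2) ω) ^ 4 ∂P ≤ Cc * ((R:ℝ) ^ 2) ^ 2 := h
        _ = Cc * (R : ℝ) ^ 4 := by ring
      calc (∫ ω, (M (R ^ 2) ω) ^ 4 ∂P) / θ ≤ (Cc * (R : ℝ) ^ 4) / θ := by gcongr
      _ = 16 * ((q : ℝ) + 1) * Cc / (R : ℝ) ^ 2 := by
          rw [hθeq]; field_simp
    have hA2 : ∀ k ∈ Finset.Ico (R ^ 2) ((R + 1) ^ 2),
        P {ω | θ ≤ (M k ω - M (R ^ 2) ω) ^ 4} ≤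
          ENNReal.ofReal (64 * ((q : ℝ) + 1) * Cc / (R : ℝ) ^ 4) := by
      intro k hkmem
      rw [Finset.mem_Ico] at hkmem
      have hle : R ^ 2 ≤ k := hkmem.1
      refine le_trans (aux_chebyshev P (hint4 (R ^ 2) k hle) hθpos)
        (ENNReal.ofReal_le_ofReal ?_)
      have hdiff : ((k - R ^ 2 : ℕ) : ℝ) ≤ 2 * (R : ℝ) := by
        have hsq : (R + 1) ^ 2 = R ^ 2 + 2 * R + 1 := by ring
        have h : k - R ^ 2 ≤ 2 * R := by omega
        calc ((k - R ^ 2 : ℕ) : ℝ) ≤ ((2 * R : ℕ) : ℝ) := by exact_mod_cast h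
        _ = 2 * (R : ℝ) := by push_cast; ring
      have hE : ∫ ω, (M k ω - M (R ^ 2) ω) ^ 4 ∂P ≤ Cc * (4 * (R : ℝ) ^ 2) := by
        refine le_trans (hbound (R ^ 2) k hle) ?_
        have h2 : ((k - R ^ 2 : ℕ) : ℝ) ^ 2 ≤ (2 * (R : ℝ)) ^ 2 :=
          pow_le_pow_left₀ (Nat.cast_nonneg _) hdiff 2
        nlinarith
      calc (∫ ω, (M k ω - M (R ^ 2) ω) ^ 4 ∂P) / θ ≤ (Cc * (4 * (R : ℝ) ^ 2)) / θ := by gcongr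
      _ = 64 * ((q : ℝ) + 1) * Cc / (R : ℝ) ^ 4 := by
          rw [hθeq]; field_simp; ring
    calc P (Bad q r) ≤ P ({ω | θ ≤ (M (R ^ 2) ω) ^ 4} ∪
        ⋃ k ∈ Finset.Ico (R ^ 2) ((R + 1) ^ 2),
          {ω | θ ≤ (M k ω - M (R ^ 2) ω) ^ 4}) := measure_mono hsub
    _ ≤ P {ω | θ ≤ (M (R ^ 2) ω) ^ 4} +
        P (⋃ k ∈ Finset.Ico (R ^ 2) ((R + 1) ^ 2),
          {ω | θ ≤ (M k ω - M (R ^ 2) ω) ^ 4}) := measure_union_le _ _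
    _ ≤ ENNReal.ofReal (16 * ((q : ℝ) + 1) * Cc / (R : ℝ) ^ 2) +
        ∑ k ∈ Finset.Ico (R ^ 2) ((R + 1) ^ 2),
          P {ω | θ ≤ (M k ω - M (R ^ 2) ω) ^ 4} :=
        add_le_add hA1 (measure_biUnion_finset_le _ _)
    _ ≤ ENNReal.ofReal (16 * ((q : ℝ) + 1) * Cc / (R : ℝ) ^ 2) +
        ∑ _k ∈ Finset.Ico (R ^ 2) ((R + 1) ^ 2),
          ENNReal.ofReal (64 * ((q : ℝ) + 1) * Cc / (R : ℝ) ^ 4) :=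
        add_le_add le_rfl (Finset.sum_le_sum hA2)
    _ ≤ ENNReal.ofReal (16 * ((q : ℝ) + 1) * Cc / (R : ℝ) ^ 2) +
        ENNReal.ofReal (192 * ((q : ℝ) + 1) * Cc / (R : ℝ) ^ 2) := by
        refine add_le_add le_rfl ?_
        rw [Finset.sum_const]
        have hcard : (Finset.Ico (R ^ 2) ((R + 1) ^ 2)).card = 2 * R + 1 := by
          rw [Nat.card_Ico]
          have hsq : (R + 1) ^ 2 = R ^ 2 + 2 * R + 1 := by ring
          omega
        rw [hcard, nsmul_eq_mul, ← ENNReal.ofReal_natCast (2 * R + 1),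
          ← ENNReal.ofReal_mul (by positivity)]
        refine ENNReal.ofReal_le_ofReal ?_
        have hc : ((2 * R + 1 : ℕ) : ℝ) = 2 * (R : ℝ) + 1 := by push_cast; ring
        rw [hc]
        rw [mul_div_assoc', div_le_div_iff₀ (by positivity) (by positivity)]
        have hfact : 2 * (R : ℝ) + 1 ≤ 3 * (R : ℝ) ^ 2 := by nlinarith
        have h64 : (0:ℝ) ≤ 64 * ((q : ℝ) + 1) * Cc := by positivity
        nlinarith [mul_nonneg (mul_nonneg h64 (sq_nonneg (R:ℝ))) (sub_nonneg.2 hfact),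
          sq_nonneg (R:ℝ)]
    _ = ENNReal.ofReal (208 * ((q : ℝ) + 1) * Cc / (R : ℝ) ^ 2) := by
        rw [← ENNReal.ofReal_add (by positivity) (by positivity)]
        congr 1; ring
  have hne : ∀ q : ℕ, (∑' r, P (Bad q r)) ≠ ⊤ := by
    intro q
    have h0 : Summable (fun n : ℕ => 1 / (n : ℝ) ^ 2) :=
      Real.summable_one_div_nat_pow.2 one_lt_two
    have h1 : Summable (fun r : ℕ => 1 / ((r + 1 : ℕ) : ℝ) ^ 2) :=
      (summable_nat_add_iff (f := fun n : ℕ => 1 / (n : ℝ) ^ 2) 1).2 h0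
    have hsummable : Summable (fun r : ℕ =>
        208 * ((q : ℝ) + 1) * Cc / ((r + 1 : ℕ) : ℝ) ^ 2) := by
      have := h1.mul_left (208 * ((q : ℝ) + 1) * Cc)
      simpa [mul_one_div, div_eq_mul_inv] using this
    have hlt : (∑' r, P (Bad q r)) ≤
        ∑' r : ℕ, ENNReal.ofReal (208 * ((q : ℝ) + 1) * Cc / ((r + 1 : ℕ) : ℝ) ^ 2) :=
      ENNReal.tsum_le_tsum (hBadP q)
    rw [← ENNReal.ofReal_tsum_of_nonneg (fun r => by positivity) hsummable] at hlt
    exact ne_top_of_le_ne_top ENNReal.ofReal_ne_top hlt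
  have hBC : ∀ᵐ ω ∂P, ∀ q : ℕ, ∀ᶠ r in atTop, ω ∉ Bad q r :=
    ae_all_iff.2 fun q => ae_eventually_notMem (hne q)
  filter_upwards [hBC] with ω hω q
  obtain ⟨r₀, hr₀⟩ := eventually_atTop.1 (hω q)
  rw [eventually_atTop]
  refine ⟨(r₀ + 1) ^ 2, fun k hk => ?_⟩
  set R := Nat.sqrt k with hRdef
  have hkR : R ^ 2 ≤ k := Nat.sqrt_le' k
  have hkR2 : k < (R + 1) ^ 2 := Nat.lt_succ_sqrt' k
  have hR1 : r₀ + 1 ≤ R := by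
    rw [hRdef]
    exact Nat.le_sqrt.2 (le_trans (by rw [← pow_two]) hk)
  have hnotin := hr₀ (R - 1) (by omega)
  have e1 : R - 1 + 1 = R := by omega
  have e2 : R - 1 + 2 = R + 1 := by omega
  rw [hBadDef] at hnotin
  simp only [Set.mem_setOf_eq, not_exists, e1, e2] at hnotin
  have hmem : k ∈ Finset.Ico (R ^ 2) ((R + 1) ^ 2) := Finset.mem_Ico.2 ⟨hkR, hkR2⟩
  have hlt := hnotin k
  push_neg at hlt
  have hlt' := hlt hmem
  have hmono : (((R ^ 2 : ℕ)) : ℝ) ^ 3 / ((q : ℝ) + 1) ≤ (k : ℝ) ^ 3 / ((q : ℝ) + 1) := by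
    have hc : (((R ^ 2 : ℕ)) : ℝ) ≤ (k : ℝ) := by exact_mod_cast hkR
    gcongr
  exact le_trans (le_of_lt hlt') hmono

end AuxLemmas

set_option maxHeartbeats 2000000 in
/-- `sup_{t ∈ [0,T]} (N_{nt}/(ν√n))^{1/2} · |μ̂_{nt} − μ| → 0` in probability
as `n → ∞`, with the convention that the term is `0` on the event `N_{nt} = 0`. -/
theorem sup_sqrt_count_mul_mean_dev_tendsto_zero_in_probability
    {Ω : Type*} [MeasurableSpace Ω] (P : Measure Ω) [IsProbabilityMeasure P]
    (ξ : ℕ → Ω → ℝ) (hmeas : ∀ i, Measurable (ξ i))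
    (hindep : iIndepFun ξ P)
    (hident : ∀ i, IdentDistrib (ξ i) (ξ 1) P P)
    (hpos : ∀ i, ∀ᵐ ω ∂P, 0 < ξ i ω)
    (hL4 : MemLp (ξ 1) 4 P)
    (μ : ℝ) (hμ : μ = ∫ ω, ξ 1 ω ∂P) (hμpos : 0 < μ)
    (ν : ℝ) (hν : ν ^ 2 = variance (fun ω => (ξ 1 ω - μ) ^ 2) P) (hνpos : 0 < ν)
    (T : ℝ) (hT : 0 < T) :
    TendstoInMeasure P
      (fun (n : ℕ) (ω : Ω) =>
        ⨆ t : Set.Icc (0 : ℝ) T,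
          if cnt ξ ((n : ℝ) * t) ω = 0 then 0
          else Real.sqrt ((cnt ξ ((n : ℝ) * t) ω : ℝ) / (ν * Real.sqrt n)) *
            |muHat ξ ((n : ℝ) * t) ω - μ|)
      atTop (fun _ => (0 : ℝ)) := by
  classical
  -- centered variables
  set X : ℕ → Ω → ℝ := fun i ω => ξ i ω - μ with hXdef
  have hXmeas : ∀ i, Measurable (X i) := fun i => (hmeas i).sub measurable_const
  have hXindep : iIndepFun X P :=
    hindep.comp (fun _ => fun x => x - μ) (fun _ => measurable_id.sub measurable_const)
  have hXid : ∀ i, IdentDistrib (X i) (X 1) P P :=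
    fun i => (hident i).comp (measurable_id.sub measurable_const)
  have hX1mem : MemLp (X 1) 4 P := hL4.sub (memLp_const μ)
  have hXmem : ∀ i, MemLp (X i) 4 P := fun i => (hXid i).symm.memLp_snd hX1mem
  have hX1zero : ∫ ω, X 1 ω ∂P = 0 := by
    have h := integral_sub (hL4.integrable (by norm_num)) (integrable_const μ)
    simp only [hXdef] at h ⊢
    rw [h, integral_const]
    simp [hμ]
  have hmom_eq : ∀ i, ∀ j : ℕ, ∫ ω, X i ω ^ j ∂P = ∫ ω, X 1 ω ^ j ∂P :=
    fun i j => ((hXid i).comp (measurable_id.pow_const j)).integral_eq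
  set σ2 : ℝ := ∫ ω, X 1 ω ^ 2 ∂P with hσ2def
  set κ : ℝ := ∫ ω, X 1 ω ^ 4 ∂P with hκdef
  set Cc : ℝ := 3 * σ2 ^ 2 + κ with hCcdef
  have hσ2 : 0 ≤ σ2 := integral_nonneg fun ω => by positivity
  have hκ0 : 0 ≤ κ := integral_nonneg fun ω => by positivity
  have hCc : 0 ≤ Cc := by nlinarith [sq_nonneg σ2]
  have key := aux_moments P X hXmeas hXindep hXmem σ2 κ
    (fun i => by
      have h := hmom_eq i 1
      simp only [pow_one] at h
      rw [h]; exact hX1zero)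
    (fun i => hmom_eq i 2) (fun i => hmom_eq i 4)
  -- partial sums of the centered variables
  set M : ℕ → Ω → ℝ := fun k ω => ∑ i ∈ Finset.Ioc 0 k, X i ω with hMdef
  have hMmeas : ∀ k, Measurable (M k) := fun k => Finset.measurable_sum _ fun i _ => hXmeas i
  have hM0 : ∀ ω, M 0 ω = 0 := fun ω => by simp [hMdef]
  have hsum_mem : ∀ s : Finset ℕ, MemLp (fun ω => ∑ i ∈ s, X i ω) 4 P := fun s => by
    have h := memLp_finset_sum' s (fun (i : ℕ) (_ : i ∈ s) => hXmem i)
    rwa [show (∑ i ∈ s, X i) = fun ω => ∑ i ∈ s, X i ω from funext fun ω => by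
      simp [Finset.sum_apply]] at h
  have hMdiff : ∀ j k : ℕ, j ≤ k → ∀ ω, M k ω - M j ω = ∑ i ∈ Finset.Ioc j k, X i ω := by
    intro j k hjk ω
    have h := Finset.sum_Ioc_consecutive (fun i => X i ω) (Nat.zero_le j) hjk
    simp only [hMdef]
    linarith
  have hint4 : ∀ j k : ℕ, j ≤ k → Integrable (fun ω => (M k ω - M j ω) ^ 4) P := by
    intro j k hjk
    have heq : (fun ω => (M k ω - M j ω) ^ 4)
        = fun ω => (∑ i ∈ Finset.Ioc j k, X i ω) ^ 4 :=
      funext fun ω => by rw [hMdiff j k hjk ω]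
    rw [heq]
    exact aux_integrable_pow P (hsum_mem _) 4 le_rfl
  have hbound4 : ∀ j k : ℕ, j ≤ k →
      ∫ ω, (M k ω - M j ω) ^ 4 ∂P ≤ Cc * ((k - j : ℕ) : ℝ) ^ 2 := by
    intro j k hjk
    have heq : (fun ω => (M k ω - M j ω) ^ 4)
        = fun ω => (∑ i ∈ Finset.Ioc j k, X i ω) ^ 4 :=
      funext fun ω => by rw [hMdiff j k hjk ω]
    rw [heq]
    have h := (key (Finset.Ioc j k)).2.2
    rwa [Nat.card_Ioc] at h
  have hgood := aux_bc P M Cc hCc hM0 hint4 hbound4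
  -- relation between pSum and M
  have hpS : ∀ k : ℕ, ∀ ω : Ω, pSum ξ k ω = M k ω + k * μ := by
    intro k ω
    have hIcc : Finset.Icc 1 k = Finset.Ioc 0 k := rfl
    simp only [pSum, hIcc, hMdef]
    have h1 : ∀ i ∈ Finset.Ioc 0 k, ξ i ω = X i ω + μ := fun i _ => by
      simp [hXdef]
    rw [Finset.sum_congr rfl h1, Finset.sum_add_distrib, Finset.sum_const, Nat.card_Ioc]
    simp [nsmul_eq_mul]
  have hpS0 : ∀ ω : Ω, pSum ξ 0 ω = 0 := fun ω => by simp [pSum]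
  have hpSmeas : ∀ k, Measurable (fun ω => pSum ξ k ω) :=
    fun k => Finset.measurable_sum _ fun i _ => hmeas i
  -- dominating sequence
  set D : ℕ → ℕ → Ω → ℝ := fun n k ω =>
    |M k ω| / (Real.sqrt k * Real.sqrt (ν * Real.sqrt n)) with hDdef
  set H : ℕ → Ω → ℝ := fun n ω =>
    ⨆ k : ℕ, (if pSum ξ k ω ≤ (n : ℝ) * T then D n k ω else 0) with hHdef
  have hDnonneg : ∀ n k ω, 0 ≤ D n k ω := fun n k ω =>
    div_nonneg (abs_nonneg _) (mul_nonneg (Real.sqrt_nonneg _) (Real.sqrt_nonneg _))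
  have hHnonneg : ∀ n ω, 0 ≤ H n ω := fun n ω =>
    Real.iSup_nonneg fun k => by split_ifs; exacts [hDnonneg n k ω, le_refl 0]
  have hHmeas : ∀ n, Measurable (H n) := by
    intro n
    apply Measurable.iSup
    intro k
    exact Measurable.ite (measurableSet_le (hpSmeas k) measurable_const)
      ((hMmeas k).abs.div_const _) measurable_const
  -- the main almost-everywhere statement
  have hmain : ∀ᵐ ω ∂P, (∀ n : ℕ, 1 ≤ n →
      (⨆ t : Set.Icc (0 : ℝ) T,
        if cnt ξ ((n : ℝ) * t) ω = 0 then 0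
        else Real.sqrt ((cnt ξ ((n : ℝ) * t) ω : ℝ) / (ν * Real.sqrt n)) *
          |muHat ξ ((n : ℝ) * t) ω - μ|) ≤ H n ω)
      ∧ Tendsto (fun n => H n ω) atTop (𝓝 0) := by
    filter_upwards [hgood] with ω hω
    -- consequence for q = 0
    obtain ⟨K₁, hK₁⟩ := eventually_atTop.1 (hω 0)
    have hK₁' : ∀ k, K₁ ≤ k → (M k ω) ^ 4 ≤ (k : ℝ) ^ 3 := fun k hk => by
      have h := hK₁ k hk; simpa using h
    set K₀ : ℕ := max K₁ (Nat.ceil ((16 : ℝ) / μ ^ 4) + 1) with hK₀def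
    have hK₀1 : 1 ≤ K₀ := le_trans (Nat.succ_le_succ (Nat.zero_le _)) (le_max_right _ _)
    have habs : ∀ k, K₀ ≤ k → |M k ω| ≤ μ * k / 2 := by
      intro k hk
      have hk1 : K₁ ≤ k := le_trans (le_max_left _ _) hk
      have hkc : (16 : ℝ) / μ ^ 4 ≤ (k : ℝ) := by
        have h1 : Nat.ceil ((16 : ℝ) / μ ^ 4) ≤ k := by
          have := le_trans (le_max_right K₁ _) hk; omega
        calc (16 : ℝ) / μ ^ 4 ≤ (Nat.ceil ((16 : ℝ) / μ ^ 4) : ℝ) := Nat.le_ceil _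
        _ ≤ (k : ℝ) := by exact_mod_cast h1
      have hk0 : 1 ≤ k := le_trans hK₀1 hk
      have hkpos : (0 : ℝ) < (k : ℝ) := by exact_mod_cast hk0
      have h16 : 16 ≤ μ ^ 4 * (k : ℝ) := by
        have h := mul_le_mul_of_nonneg_left hkc (le_of_lt (pow_pos hμpos 4))
        calc (16 : ℝ) = μ ^ 4 * (16 / μ ^ 4) := by field_simp
        _ ≤ μ ^ 4 * (k : ℝ) := h
      have hcube : (k : ℝ) ^ 3 ≤ (μ * k / 2) ^ 4 := by
        have he : (μ * (k : ℝ) / 2) ^ 4 = μ ^ 4 * (k : ℝ) ^ 4 / 16 := by ring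
        rw [he, le_div_iff₀ (by norm_num : (0:ℝ) < 16)]
        calc (k : ℝ) ^ 3 * 16 = 16 * (k : ℝ) ^ 3 := by ring
        _ ≤ (μ ^ 4 * (k : ℝ)) * (k : ℝ) ^ 3 := by
            exact mul_le_mul_of_nonneg_right h16 (by positivity)
        _ = μ ^ 4 * (k : ℝ) ^ 4 := by ring
      have h4 : (M k ω) ^ 4 ≤ (μ * k / 2) ^ 4 := le_trans (hK₁' k hk1) hcube
      have habs4 : |M k ω| ^ 4 ≤ (μ * k / 2) ^ 4 := by
        rwa [show |M k ω| ^ 4 = (M k ω) ^ 4 from by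
          rw [← abs_pow]; exact abs_of_nonneg (by positivity)]
      exact le_of_pow_le_pow_left₀ (by norm_num) (by positivity) habs4
    -- upper bound for the counting sets
    have hub : ∀ n : ℕ, ∀ k : ℕ, pSum ξ k ω ≤ (n : ℝ) * T →
        (k : ℝ) ≤ (K₀ : ℝ) + 2 * (n : ℝ) * T / μ := by
      intro n k hkmem
      by_cases hkK : k ≤ K₀
      · have h1 : (k : ℝ) ≤ (K₀ : ℝ) := by exact_mod_cast hkK
        have h2 : 0 ≤ 2 * (n : ℝ) * T / μ := by positivity
        linarith
      · push_neg at hkK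
        have h1 := habs k (le_of_lt hkK)
        have hps := hpS k ω
        have hMk : -(μ * k / 2) ≤ M k ω := neg_le_of_abs_le h1
        have h2 : μ * k / 2 ≤ (n : ℝ) * T := by nlinarith
        have h3 : (k : ℝ) ≤ 2 * (n : ℝ) * T / μ := by
          rw [le_div_iff₀ hμpos]; nlinarith
        have h4 : (0 : ℝ) ≤ (K₀ : ℝ) := Nat.cast_nonneg _
        linarith
    have hbddA : ∀ n : ℕ, BddAbove {k : ℕ | pSum ξ k ω ≤ (n : ℝ) * T} := by
      intro n
      refine ⟨K₀ + Nat.ceil (2 * (n : ℝ) * T / μ), fun k hk => ?_⟩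
      have h1 := hub n k hk
      have h2 : (k : ℝ) ≤ (K₀ : ℝ) + (Nat.ceil (2 * (n : ℝ) * T / μ) : ℝ) :=
        le_trans h1 (by
          have := Nat.le_ceil (2 * (n : ℝ) * T / μ); linarith)
      have h3 : (k : ℝ) ≤ ((K₀ + Nat.ceil (2 * (n : ℝ) * T / μ) : ℕ) : ℝ) := by
        push_cast; linarith
      exact_mod_cast h3
    constructor
    · -- domination of the supremum by H
      intro n hn
      refine Real.iSup_le (fun t => ?_) (hHnonneg n ω)
      by_cases hN : cnt ξ ((n : ℝ) * t) ω = 0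
      · rw [if_pos hN]; exact hHnonneg n ω
      · rw [if_neg hN]
        have htmem := t.2
        have hnt0 : (0 : ℝ) ≤ (n : ℝ) * ↑t := mul_nonneg (Nat.cast_nonneg n) htmem.1
        have hAne : {k : ℕ | pSum ξ k ω ≤ (n : ℝ) * ↑t}.Nonempty :=
          ⟨0, by simp only [Set.mem_setOf_eq, hpS0 ω]; exact hnt0⟩
        have hsubset : {k : ℕ | pSum ξ k ω ≤ (n : ℝ) * ↑t}
            ⊆ {k : ℕ | pSum ξ k ω ≤ (n : ℝ) * T} := fun k hk =>
          le_trans hk (mul_le_mul_of_nonneg_left htmem.2 (Nat.cast_nonneg n))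
        have hAbdd : BddAbove {k : ℕ | pSum ξ k ω ≤ (n : ℝ) * ↑t} :=
          (hbddA n).mono hsubset
        have hNmem : pSum ξ (cnt ξ ((n : ℝ) * ↑t) ω) ω ≤ (n : ℝ) * ↑t := by
          have h := Nat.sSup_mem hAne hAbdd
          exact h
        set N := cnt ξ ((n : ℝ) * ↑t) ω with hNdef
        have hNT : pSum ξ N ω ≤ (n : ℝ) * T := le_trans hNmem
          (mul_le_mul_of_nonneg_left htmem.2 (Nat.cast_nonneg n))
        have hN1 : 1 ≤ N := Nat.one_le_iff_ne_zero.2 hN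
        have hnpos : (0 : ℝ) < (n : ℝ) := by exact_mod_cast hn
        have hc' : 0 < ν * Real.sqrt n := mul_pos hνpos (Real.sqrt_pos.2 hnpos)
        have hNpos : (0 : ℝ) < (N : ℝ) := by exact_mod_cast hN1
        have hval : Real.sqrt ((N : ℝ) / (ν * Real.sqrt n)) * |muHat ξ ((n : ℝ) * ↑t) ω - μ|
            = D n N ω := by
          rw [muHat]
          rw [← hNdef, hpS N ω]
          have h1 : (M N ω + N * μ) / (N : ℝ) - μ = M N ω / (N : ℝ) := by
            field_simp; ring
          rw [h1, abs_div, abs_of_pos hNpos,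
            Real.sqrt_div (Nat.cast_nonneg N) _, hDdef]
          have hsN : (0:ℝ) < Real.sqrt (N : ℝ) := Real.sqrt_pos.2 hNpos
          have hsc : (0:ℝ) < Real.sqrt (ν * Real.sqrt n) := Real.sqrt_pos.2 hc'
          have hNN : (N : ℝ) = Real.sqrt (N:ℝ) * Real.sqrt (N:ℝ) :=
            (Real.mul_self_sqrt (Nat.cast_nonneg N)).symm
          rw [div_mul_div_comm, div_eq_div_iff (by positivity) (by positivity)]
          calc Real.sqrt (N:ℝ) * |M N ω| * (Real.sqrt (N:ℝ) * Real.sqrt (ν * Real.sqrt n))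
              = |M N ω| * (Real.sqrt (ν * Real.sqrt n) *
                (Real.sqrt (N:ℝ) * Real.sqrt (N:ℝ))) := by ring
          _ = |M N ω| * (Real.sqrt (ν * Real.sqrt n) * (N : ℝ)) := by rw [← hNN]
        rw [hval]
        have hup : ∀ j : ℕ, (if pSum ξ j ω ≤ (n : ℝ) * T then D n j ω else 0)
            ≤ ∑ i ∈ Finset.range (K₀ + Nat.ceil (2 * (n : ℝ) * T / μ) + 1), D n i ω := by
          intro j
          split_ifs with hj
          · have hjle : j ≤ K₀ + Nat.ceil (2 * (n : ℝ) * T / μ) := by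
              have h1 := hub n j hj
              have h2 : (j : ℝ) ≤ ((K₀ + Nat.ceil (2 * (n : ℝ) * T / μ) : ℕ) : ℝ) := by
                push_cast
                have := Nat.le_ceil (2 * (n : ℝ) * T / μ); linarith
              exact_mod_cast h2
            exact Finset.single_le_sum (fun i _ => hDnonneg n i ω)
              (Finset.mem_range.2 (by omega))
          · exact Finset.sum_nonneg fun i _ => hDnonneg n i ω
        have hbddR : BddAbove (Set.range fun j =>
            if pSum ξ j ω ≤ (n : ℝ) * T then D n j ω else 0) :=
          ⟨_, Set.forall_mem_range.2 hup⟩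
        calc D n N ω = (if pSum ξ N ω ≤ (n : ℝ) * T then D n N ω else 0) := by
              rw [if_pos hNT]
        _ ≤ H n ω := le_ciSup hbddR N
    · -- convergence of H to 0
      rw [Metric.tendsto_atTop]
      intro ε hε
      set C₀ : ℝ := (K₀ : ℝ) + 2 * T / μ + 1 with hC₀def
      have hC₀pos : 0 < C₀ := by positivity
      obtain ⟨q, hq⟩ := exists_nat_gt (C₀ / (ν ^ 2 * (ε / 2) ^ 4))
      have hqkey : C₀ < ((q : ℝ) + 1) * ν ^ 2 * (ε / 2) ^ 4 := by
        have h2 : C₀ / (ν ^ 2 * (ε / 2) ^ 4) < (q : ℝ) + 1 := lt_trans hq (by linarith)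
        rw [div_lt_iff₀ (by positivity)] at h2
        nlinarith
      obtain ⟨K₂, hK₂⟩ := eventually_atTop.1 (hω q)
      set K : ℕ := max K₂ 1 with hKdef
      set B : ℝ := ∑ j ∈ Finset.range K, |M j ω| with hBdef
      have hBnonneg : 0 ≤ B := Finset.sum_nonneg fun i _ => abs_nonneg _
      have hev1 : ∀ᶠ n : ℕ in atTop, ((B / (ε / 2)) ^ 2 / ν) ^ 2 < (n : ℝ) :=
        tendsto_natCast_atTop_atTop.eventually_gt_atTop _
      obtain ⟨n₀, hn₀⟩ := eventually_atTop.1 (hev1.and (eventually_ge_atTop 1))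
      refine ⟨n₀, fun n hn => ?_⟩
      obtain ⟨hngt, hn1⟩ := hn₀ n hn
      have hnpos : (0 : ℝ) < (n : ℝ) := by exact_mod_cast hn1
      have hsqrtc : B / (ε / 2) < Real.sqrt (ν * Real.sqrt n) := by
        have h1 : (B / (ε / 2)) ^ 2 / ν < Real.sqrt n := Real.lt_sqrt_of_sq_lt hngt
        rw [div_lt_iff₀ hνpos] at h1
        exact Real.lt_sqrt_of_sq_lt (by linarith)
      have hc' : 0 < ν * Real.sqrt n := mul_pos hνpos (Real.sqrt_pos.2 hnpos)
      have hsqc : 0 < Real.sqrt (ν * Real.sqrt n) := Real.sqrt_pos.2 hc'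
      have hterm : ∀ k : ℕ, (if pSum ξ k ω ≤ (n : ℝ) * T then D n k ω else 0) ≤ ε / 2 := by
        intro k
        split_ifs with hkmem
        swap
        · linarith
        by_cases hk0 : k = 0
        · subst hk0
          have : D n 0 ω = 0 := by simp [hDdef, hM0 ω]
          rw [this]; linarith
        have hk1 : 1 ≤ k := Nat.one_le_iff_ne_zero.2 hk0
        have hk1R : (1 : ℝ) ≤ (k : ℝ) := by exact_mod_cast hk1
        have hsqk : 1 ≤ Real.sqrt (k : ℝ) := by
          rw [show (1 : ℝ) = Real.sqrt 1 from Real.sqrt_one.symm]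
          exact Real.sqrt_le_sqrt hk1R
        by_cases hkK : k < K
        · have hMle : |M k ω| ≤ B :=
            Finset.single_le_sum (fun i _ => abs_nonneg (M i ω)) (Finset.mem_range.2 hkK)
          have hD : D n k ω ≤ B / Real.sqrt (ν * Real.sqrt n) := by
            rw [hDdef]
            apply div_le_div₀ hBnonneg hMle hsqc
            calc Real.sqrt (ν * Real.sqrt n)
                = 1 * Real.sqrt (ν * Real.sqrt n) := (one_mul _).symm
            _ ≤ Real.sqrt (k : ℝ) * Real.sqrt (ν * Real.sqrt n) :=
                mul_le_mul_of_nonneg_right hsqk (le_of_lt hsqc)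
          have h2 : B / Real.sqrt (ν * Real.sqrt n) < ε / 2 := by
            rw [div_lt_iff₀ hsqc]
            have h3 := (div_lt_iff₀ (by linarith : (0:ℝ) < ε / 2)).1 hsqrtc
            linarith
          linarith
        · push_neg at hkK
          have hk2 : K₂ ≤ k := le_trans (le_max_left _ _) hkK
          have hM4 := hK₂ k hk2
          have hkC₀ : (k : ℝ) ≤ C₀ * n := by
            have h1 := hub n k hkmem
            have hn1R : (1 : ℝ) ≤ (n : ℝ) := by exact_mod_cast hn1
            have hK₀0 : (0 : ℝ) ≤ (K₀ : ℝ) := Nat.cast_nonneg _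
            have hTμ : (0:ℝ) ≤ 2 * T / μ := by positivity
            have h2 : (K₀ : ℝ) + 2 * (n : ℝ) * T / μ ≤ C₀ * n := by
              rw [hC₀def]
              have he : 2 * (n : ℝ) * T / μ = (2 * T / μ) * n := by ring
              rw [he]
              nlinarith [mul_nonneg hK₀0 (sub_nonneg.2 hn1R)]
            exact le_trans h1 h2
          have hden : (Real.sqrt (k : ℝ) * Real.sqrt (ν * Real.sqrt n)) ^ 4
              = (k : ℝ) ^ 2 * (ν ^ 2 * (n : ℝ)) := by
            rw [mul_pow]
            have h1 : Real.sqrt (k : ℝ) ^ 4 = (k : ℝ) ^ 2 := by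
              rw [show 4 = 2 * 2 from rfl, pow_mul, Real.sq_sqrt (Nat.cast_nonneg k)]
            have h2 : Real.sqrt (ν * Real.sqrt n) ^ 4 = (ν * Real.sqrt n) ^ 2 := by
              rw [show 4 = 2 * 2 from rfl, pow_mul, Real.sq_sqrt (le_of_lt hc')]
            rw [h1, h2, mul_pow, Real.sq_sqrt (le_of_lt hnpos)]
          have hD4 : (D n k ω) ^ 4 ≤ (ε / 2) ^ 4 := by
            rw [hDdef]
            simp only []
            rw [div_pow, hden, div_le_iff₀ (by positivity)]
            have hnum : |M k ω| ^ 4 = (M k ω) ^ 4 := by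
              rw [← abs_pow]; exact abs_of_nonneg (by positivity)
            rw [hnum]
            have hstep : (k : ℝ) ^ 3 / ((q : ℝ) + 1)
                ≤ (ε / 2) ^ 4 * ((k : ℝ) ^ 2 * (ν ^ 2 * n)) := by
              rw [div_le_iff₀ (by positivity)]
              have h3 : (k : ℝ) ^ 3 ≤ (k : ℝ) ^ 2 * (C₀ * n) := by
                calc (k : ℝ) ^ 3 = (k : ℝ) ^ 2 * (k : ℝ) := by ring
                _ ≤ (k : ℝ) ^ 2 * (C₀ * n) :=
                    mul_le_mul_of_nonneg_left hkC₀ (sq_nonneg _)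
              have h4 : (k : ℝ) ^ 2 * (C₀ * n)
                  ≤ (k : ℝ) ^ 2 * ((((q : ℝ) + 1) * ν ^ 2 * (ε / 2) ^ 4) * n) :=
                mul_le_mul_of_nonneg_left
                  (mul_le_mul_of_nonneg_right (le_of_lt hqkey) (le_of_lt hnpos))
                  (sq_nonneg _)
              have h5 : (k : ℝ) ^ 2 * ((((q : ℝ) + 1) * ν ^ 2 * (ε / 2) ^ 4) * n)
                  = (ε / 2) ^ 4 * ((k : ℝ) ^ 2 * (ν ^ 2 * n)) * ((q : ℝ) + 1) := by ring
              exact le_trans (le_trans h3 h4) (le_of_eq h5)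
            exact le_trans hM4 hstep
          exact le_of_pow_le_pow_left₀ (by norm_num) (by linarith) hD4
      have hHle : H n ω ≤ ε / 2 := Real.iSup_le hterm (by linarith)
      rw [Real.dist_eq, sub_zero, abs_of_nonneg (hHnonneg n ω)]
      linarith
  -- conclude: convergence in measure
  intro ε hε
  have htim : TendstoInMeasure P H atTop (fun _ => (0 : ℝ)) :=
    tendstoInMeasure_of_tendsto_ae (fun n => (hHmeas n).aestronglyMeasurable)
      (hmain.mono fun ω hω => hω.2)
  have hb := htim ε hε
  refine tendsto_of_tendsto_of_tendsto_of_le_of_le' tendsto_const_nhds hb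
    (Eventually.of_forall fun n => bot_le) ?_
  filter_upwards [eventually_ge_atTop 1] with n hn
  refine measure_mono_ae ?_
  refine hmain.mono fun ω hω => ?_
  intro hmem
  have hmem' : ε ≤ edist (⨆ t : Set.Icc (0 : ℝ) T,
      if cnt ξ ((n : ℝ) * t) ω = 0 then 0
      else Real.sqrt ((cnt ξ ((n : ℝ) * t) ω : ℝ) / (ν * Real.sqrt n)) *
        |muHat ξ ((n : ℝ) * t) ω - μ|) (0:ℝ) := hmem
  show ε ≤ edist (H n ω) (0:ℝ)
  rw [edist_dist, Real.dist_eq, sub_zero] at hmem' ⊢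
  have h1 := hω.1 n hn
  have hfnonneg : (0:ℝ) ≤ ⨆ t : Set.Icc (0 : ℝ) T,
      if cnt ξ ((n : ℝ) * t) ω = 0 then 0
      else Real.sqrt ((cnt ξ ((n : ℝ) * t) ω : ℝ) / (ν * Real.sqrt n)) *
        |muHat ξ ((n : ℝ) * t) ω - μ| :=
    Real.iSup_nonneg fun t => by
      split_ifs
      · exact le_refl 0
      · exact mul_nonneg (Real.sqrt_nonneg _) (abs_nonneg _)
  rw [abs_of_nonneg hfnonneg] at hmem'
  rw [abs_of_nonneg (hHnonneg n ω)]
  exact le_trans hmem' (ENNReal.ofReal_le_ofReal h1)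
end

section
/- Almost surely, sup_{t ∈ [h,T−h]} |ν̂²_ri − ν²| → 0 and sup_{t ∈ [h,T−h]} |ν̂²_le − ν²| → 0 as n → ∞. -/
open MeasureTheory ProbabilityTheory Filter Topology

/-- Globally estimated mean `μ̂_{nT}`. -/
noncomputable def muHatGlobal {Ω : Type*} (ξ : ℕ → Ω → ℝ) (T : ℝ) (n : ℕ) (ω : Ω) : ℝ :=
  muHat ξ ((n : ℝ) * T) ω

/-- Left window index set `Î_le = {N_{n(t−h)}+2, …, N_{nt}}`. -/
noncomputable def Ile {Ω : Type*} (ξ : ℕ → Ω → ℝ) (n : ℕ) (h t : ℝ) (ω : Ω) : Finset ℕ :=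
  Finset.Icc (cnt ξ ((n : ℝ) * (t - h)) ω + 2) (cnt ξ ((n : ℝ) * t) ω)

/-- Right window index set `Î_ri = {N_{nt}+2, …, N_{n(t+h)}}`. -/
noncomputable def Iri {Ω : Type*} (ξ : ℕ → Ω → ℝ) (n : ℕ) (h t : ℝ) (ω : Ω) : Finset ℕ :=
  Finset.Icc (cnt ξ ((n : ℝ) * t) ω + 2) (cnt ξ ((n : ℝ) * (t + h)) ω)

/-- `V̂_i = (ξ_i − μ̂_{nT})²`. -/
noncomputable def Vhat {Ω : Type*} (ξ : ℕ → Ω → ℝ) (T : ℝ) (n : ℕ) (i : ℕ) (ω : Ω) : ℝ :=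
  (ξ i ω - muHatGlobal ξ T n ω) ^ 2

/-- Window variance estimator `σ̂² = (1/|s|) ∑_{i∈s} V̂_i`
(`0` on an empty index set by the division-by-zero convention). -/
noncomputable def sigmaHatSqOn {Ω : Type*} (ξ : ℕ → Ω → ℝ) (T : ℝ) (n : ℕ) (s : Finset ℕ)
    (ω : Ω) : ℝ :=
  (∑ i ∈ s, Vhat ξ T n i ω) / s.card

/-- Window estimator `ν̂² = (1/|s|) ∑_{i∈s} (V̂_i − σ̂²)²`
(`0` on an empty index set by the division-by-zero convention). -/
noncomputable def nuHatSqOn {Ω : Type*} (ξ : ℕ → Ω → ℝ) (T : ℝ) (n : ℕ) (s : Finset ℕ)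
    (ω : Ω) : ℝ :=
  (∑ i ∈ s, (Vhat ξ T n i ω - sigmaHatSqOn ξ T n s ω) ^ 2) / s.card

/-- Empirical mean of the life times with indices in `s`
(`0` on an empty index set by the division-by-zero convention). -/
noncomputable def avgOn {Ω : Type*} (ξ : ℕ → Ω → ℝ) (s : Finset ℕ) (ω : Ω) : ℝ :=
  (∑ i ∈ s, ξ i ω) / s.card

/-! ### Auxiliary lemmas -/

section Aux

variable {Ω : Type*}

lemma sum_shift (g : ℕ → ℝ) (k : ℕ) :
    ∑ i ∈ Finset.range k, g (i + 1) = ∑ i ∈ Finset.Icc 1 k, g i := by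
  induction k with
  | zero => simp
  | succ k ih => rw [Finset.sum_range_succ, ih, Finset.sum_Icc_succ_top (by omega)]

/-- From Cesàro convergence, an affine bound valid for every `k`. -/
lemma affine_of_cesaro {f : ℕ → ℝ} {m : ℝ}
    (hf : Tendsto (fun k : ℕ => f k / (k : ℝ)) atTop (𝓝 m))
    {ε : ℝ} (hε : 0 < ε) :
    ∃ C : ℝ, 0 ≤ C ∧ ∀ k : ℕ, |f k - (k : ℝ) * m| ≤ ε * k + C := by
  obtain ⟨K, hK⟩ := Metric.tendsto_atTop.mp hf ε hε
  set K' := max K 1 with hK'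
  refine ⟨∑ j ∈ Finset.range K', |f j - (j : ℝ) * m|,
    Finset.sum_nonneg fun j _ => abs_nonneg _, fun k => ?_⟩
  rcases lt_or_ge k K' with hk | hk
  · have h1 : |f k - (k : ℝ) * m| ≤ ∑ j ∈ Finset.range K', |f j - (j : ℝ) * m| :=
      Finset.single_le_sum (f := fun j => |f j - (j : ℝ) * m|)
        (fun j _ => abs_nonneg _) (Finset.mem_range.mpr hk)
    have h2 : (0 : ℝ) ≤ ε * k := by positivity
    linarith
  · have hk1 : 1 ≤ k := le_trans (le_max_right K 1) hk
    have hkpos : (0 : ℝ) < (k : ℝ) := by exact_mod_cast hk1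
    have hd := hK k (le_trans (le_max_left K 1) hk)
    rw [Real.dist_eq] at hd
    have heq : f k - (k : ℝ) * m = (k : ℝ) * (f k / k - m) := by field_simp
    rw [heq, abs_mul, abs_of_pos hkpos]
    have h3 : (k : ℝ) * |f k / k - m| ≤ (k : ℝ) * ε :=
      mul_le_mul_of_nonneg_left hd.le hkpos.le
    have h4 : (0 : ℝ) ≤ ∑ j ∈ Finset.range K', |f j - (j : ℝ) * m| :=
      Finset.sum_nonneg fun j _ => abs_nonneg _
    nlinarith

lemma pSum_zero (ξ : ℕ → Ω → ℝ) (ω : Ω) : pSum ξ 0 ω = 0 := by simp [pSum]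

lemma pSum_succ (ξ : ℕ → Ω → ℝ) (ω : Ω) (k : ℕ) :
    pSum ξ (k + 1) ω = pSum ξ k ω + ξ (k + 1) ω :=
  Finset.sum_Icc_succ_top (by omega) _

lemma pSum_mono (ξ : ℕ → Ω → ℝ) (ω : Ω) (hx : ∀ i, 1 ≤ i → 0 < ξ i ω) :
    Monotone fun k => pSum ξ k ω :=
  monotone_nat_of_le_succ fun k => by
    rw [pSum_succ]; linarith [hx (k + 1) (by omega)]

section Cnt

variable (ξ : ℕ → Ω → ℝ) (ω : Ω) {μ : ℝ}
  (hS : Tendsto (fun k : ℕ => pSum ξ k ω / (k : ℝ)) atTop (𝓝 μ)) (hμ : 0 < μ)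

include hS hμ

lemma cnt_bddAbove (t : ℝ) : BddAbove {k : ℕ | pSum ξ k ω ≤ t} := by
  obtain ⟨C, hC0, hC⟩ := affine_of_cesaro hS (half_pos hμ)
  refine ⟨⌈(t + C) / (μ / 2)⌉₊, fun k hk => ?_⟩
  have hk' : pSum ξ k ω ≤ t := hk
  have h1 := (abs_le.mp (hC k)).1
  have h2 : (μ / 2) * (k : ℝ) ≤ t + C := by nlinarith
  have h3 : (k : ℝ) ≤ (t + C) / (μ / 2) := by
    rw [le_div_iff₀ (half_pos hμ)]; linarith
  exact_mod_cast h3.trans (Nat.le_ceil _)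

lemma cnt_spec {t : ℝ} (ht : 0 ≤ t) : pSum ξ (cnt ξ t ω) ω ≤ t :=
  Nat.sSup_mem ⟨0, by simpa [Set.mem_setOf_eq, pSum_zero] using ht⟩
    (cnt_bddAbove ξ ω hS hμ t)

lemma le_cnt {t : ℝ} {k : ℕ} (hk : pSum ξ k ω ≤ t) : k ≤ cnt ξ t ω :=
  le_csSup (cnt_bddAbove ξ ω hS hμ t) hk

lemma cnt_lt {t : ℝ} (ht : 0 ≤ t) : t < pSum ξ (cnt ξ t ω + 1) ω := by
  by_contra hcon
  push_neg at hcon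
  have := le_cnt ξ ω hS hμ hcon
  omega

lemma cnt_mono {s t : ℝ} (hs : 0 ≤ s) (hst : s ≤ t) : cnt ξ s ω ≤ cnt ξ t ω :=
  le_cnt ξ ω hS hμ ((cnt_spec ξ ω hS hμ hs).trans hst)

lemma cnt_tendsto {T' : ℝ} (hT' : 0 < T') :
    Tendsto (fun n : ℕ => cnt ξ ((n : ℝ) * T') ω) atTop atTop := by
  rw [tendsto_atTop_atTop]
  intro k
  obtain ⟨i, hi⟩ := exists_nat_ge (pSum ξ k ω / T')
  refine ⟨i, fun a ha => ?_⟩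
  apply le_cnt ξ ω hS hμ
  rw [div_le_iff₀ hT'] at hi
  have : (i : ℝ) * T' ≤ (a : ℝ) * T' := by
    have : (i : ℝ) ≤ a := by exact_mod_cast ha
    nlinarith
  linarith

end Cnt

section Window

variable (ξ : ℕ → Ω → ℝ) (ω : Ω) {μ T h : ℝ}
  (hS : Tendsto (fun k : ℕ => pSum ξ k ω / (k : ℝ)) atTop (𝓝 μ)) (hμ : 0 < μ)
  (hT : 0 < T) (hh : 0 < h) (hhT : h ≤ T / 2)

include hS hμ hT hh hhT

set_option maxHeartbeats 1000000 in
lemma window_bounds :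
    ∃ C : ℝ, 0 ≤ C ∧ ∀ᶠ n : ℕ in atTop, ∀ u ∈ Set.Icc (0 : ℝ) (T - h),
      cnt ξ ((n : ℝ) * u) ω + 2 ≤ cnt ξ ((n : ℝ) * (u + h)) ω ∧
      (n : ℝ) * h ≤ 4 * μ * ((cnt ξ ((n : ℝ) * (u + h)) ω : ℝ) -
        (cnt ξ ((n : ℝ) * u) ω : ℝ) - 1) ∧
      μ * (cnt ξ ((n : ℝ) * (u + h)) ω : ℝ) ≤ 2 * ((n : ℝ) * T + C) := by
  have hε₂pos : (0 : ℝ) < min (μ / 2) (h * μ / (8 * T)) :=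
    lt_min (by positivity) (by positivity)
  set ε₂ := min (μ / 2) (h * μ / (8 * T)) with hε₂def
  obtain ⟨C, hC0, hC⟩ := affine_of_cesaro hS hε₂pos
  refine ⟨C, hC0, ?_⟩
  obtain ⟨n₀, hn₀⟩ := exists_nat_gt ((4 * C + 4 * μ) / h)
  filter_upwards [eventually_ge_atTop n₀] with n hn
  intro u hu
  obtain ⟨hu0, huT⟩ := hu
  have hn0 : (0 : ℝ) ≤ (n : ℝ) := Nat.cast_nonneg n
  have hnh : 4 * C + 4 * μ ≤ (n : ℝ) * h := by
    have h1 : (n₀ : ℝ) ≤ n := Nat.cast_le.mpr hn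
    rw [div_lt_iff₀ hh] at hn₀
    have h2 : (n₀ : ℝ) * h ≤ (n : ℝ) * h := mul_le_mul_of_nonneg_right h1 hh.le
    linarith
  have ht01 : (n : ℝ) * u ≤ (n : ℝ) * (u + h) :=
    mul_le_mul_of_nonneg_left (by linarith) hn0
  have ht₀0 : 0 ≤ (n : ℝ) * u := mul_nonneg hn0 hu0
  have ht₁0 : 0 ≤ (n : ℝ) * (u + h) := le_trans ht₀0 ht01
  have ht₁T : (n : ℝ) * (u + h) ≤ (n : ℝ) * T :=
    mul_le_mul_of_nonneg_left (by linarith) hn0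
  set a := cnt ξ ((n : ℝ) * u) ω with hadef
  set b := cnt ξ ((n : ℝ) * (u + h)) ω with hbdef
  have hab : a ≤ b := cnt_mono ξ ω hS hμ ht₀0 ht01
  have habr : (a : ℝ) ≤ (b : ℝ) := Nat.cast_le.mpr hab
  have hSa : pSum ξ a ω ≤ (n : ℝ) * u := cnt_spec ξ ω hS hμ ht₀0
  have hSb : pSum ξ b ω ≤ (n : ℝ) * (u + h) := cnt_spec ξ ω hS hμ ht₁0
  have hSb1 : (n : ℝ) * (u + h) < pSum ξ (b + 1) ω := cnt_lt ξ ω hS hμ ht₁0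
  clear_value a b
  clear hadef hbdef
  have hε₂μ : ε₂ ≤ μ / 2 := min_le_left _ _
  have hε₂h : ε₂ ≤ h * μ / (8 * T) := min_le_right _ _
  have hp : (0 : ℝ) < μ + ε₂ := by linarith
  have hq : (0 : ℝ) < μ - ε₂ := by linarith
  have hCa := (abs_le.mp (hC a)).1
  have hCb := (abs_le.mp (hC (b + 1))).2
  have hCbb := (abs_le.mp (hC b)).1
  push_cast at hCb
  have hi : (μ - ε₂) * (a : ℝ) ≤ (n : ℝ) * u + C := by nlinarith [hCa, hSa]
  have hii : (n : ℝ) * (u + h) < (μ + ε₂) * ((b : ℝ) + 1) + C := by nlinarith [hCb, hSb1]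
  have k1 : (μ ^ 2 - ε₂ ^ 2) * (a : ℝ) ≤ ((n : ℝ) * u + C) * (μ + ε₂) := by
    nlinarith [mul_le_mul_of_nonneg_right hi hp.le]
  have k2 : ((n : ℝ) * (u + h) - C) * (μ - ε₂) ≤ (μ ^ 2 - ε₂ ^ 2) * ((b : ℝ) + 1) := by
    nlinarith [mul_le_mul_of_nonneg_right hii.le hq.le]
  have hba : (0 : ℝ) ≤ (b : ℝ) + 1 - a := by linarith
  have k3 : (μ ^ 2 - ε₂ ^ 2) * ((b : ℝ) + 1 - a) ≤ μ ^ 2 * ((b : ℝ) + 1 - a) := by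
    nlinarith [mul_nonneg (sq_nonneg ε₂) hba]
  have hidT : (h * μ / (8 * T)) * ((n : ℝ) * (2 * T)) = μ * ((n : ℝ) * h) / 4 := by
    field_simp; ring
  have hu2 : ε₂ * ((n : ℝ) * (2 * u + h)) ≤ μ * ((n : ℝ) * h) / 4 := by
    have h2uh : 2 * u + h ≤ 2 * T := by linarith
    have hm0 : (n : ℝ) * (2 * u + h) ≤ (n : ℝ) * (2 * T) :=
      mul_le_mul_of_nonneg_left h2uh hn0
    have hm1 : ε₂ * ((n : ℝ) * (2 * u + h)) ≤ ε₂ * ((n : ℝ) * (2 * T)) :=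
      mul_le_mul_of_nonneg_left hm0 hε₂pos.le
    have hm2 : ε₂ * ((n : ℝ) * (2 * T)) ≤ (h * μ / (8 * T)) * ((n : ℝ) * (2 * T)) :=
      mul_le_mul_of_nonneg_right hε₂h (by positivity)
    linarith [hidT.le]
  have key : (3 / 4 : ℝ) * μ * ((n : ℝ) * h) - 2 * μ * C ≤ μ ^ 2 * ((b : ℝ) + 1 - a) := by
    nlinarith [k1, k2, k3, hu2]
  have hdiv : (3 / 4 : ℝ) * ((n : ℝ) * h) - 2 * C ≤ μ * ((b : ℝ) + 1 - a) := by
    have h1 : μ * ((3 / 4 : ℝ) * ((n : ℝ) * h) - 2 * C) ≤ μ * (μ * ((b : ℝ) + 1 - a)) := by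
      nlinarith [key]
    exact (mul_le_mul_iff_right₀ hμ).mp h1
  have g2 : (n : ℝ) * h ≤ 4 * μ * ((b : ℝ) - (a : ℝ) - 1) := by linarith
  have g1 : a + 2 ≤ b := by
    have h0 : 4 * μ * 1 ≤ 4 * μ * ((b : ℝ) - (a : ℝ) - 1) := by linarith
    have h1 : (1 : ℝ) ≤ (b : ℝ) - (a : ℝ) - 1 :=
      (mul_le_mul_iff_right₀ (by positivity : (0 : ℝ) < 4 * μ)).mp h0
    have h2 : (a : ℝ) + 2 ≤ (b : ℝ) := by linarith
    exact_mod_cast h2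
  have g3 : μ * (b : ℝ) ≤ 2 * ((n : ℝ) * T + C) := by
    have h1 : ε₂ * (b : ℝ) ≤ (μ / 2) * (b : ℝ) :=
      mul_le_mul_of_nonneg_right hε₂μ (Nat.cast_nonneg b)
    nlinarith [hCbb, hSb, ht₁T]
  exact ⟨g1, g2, g3⟩

set_option maxHeartbeats 1000000 in
lemma wavg_unif (g : ℕ → ℝ) (m : ℝ)
    (hA : Tendsto (fun k : ℕ => (∑ i ∈ Finset.Icc 1 k, g i) / (k : ℝ)) atTop (𝓝 m))
    {ε : ℝ} (hε : 0 < ε) :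
    ∀ᶠ n : ℕ in atTop, ∀ u ∈ Set.Icc (0 : ℝ) (T - h),
      |(∑ i ∈ Finset.Icc (cnt ξ ((n : ℝ) * u) ω + 2) (cnt ξ ((n : ℝ) * (u + h)) ω), g i) /
        ((Finset.Icc (cnt ξ ((n : ℝ) * u) ω + 2) (cnt ξ ((n : ℝ) * (u + h)) ω)).card : ℝ)
        - m| < ε := by
  obtain ⟨C1, hC1, hwin⟩ := window_bounds ξ ω hS hμ hT hh hhT
  have hε₁ : (0 : ℝ) < ε * h / (32 * T) := by positivity
  set ε₁ := ε * h / (32 * T) with hε₁def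
  obtain ⟨C3, hC3, hCA⟩ := affine_of_cesaro hA hε₁
  obtain ⟨n₁, hn₁⟩ := exists_nat_gt ((4 * ε₁ * C1 + 2 * μ * C3) * (8 / (ε * h)))
  filter_upwards [hwin, eventually_ge_atTop n₁] with n hwn hn
  intro u hu
  obtain ⟨hab, hlow, hup⟩ := hwn u hu
  set a := cnt ξ ((n : ℝ) * u) ω with hadef
  set b := cnt ξ ((n : ℝ) * (u + h)) ω with hbdef
  clear_value a b
  clear hadef hbdef hwn
  have habr : (a : ℝ) + 2 ≤ (b : ℝ) := by exact_mod_cast hab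
  have hcard : ((Finset.Icc (a + 2) b).card : ℝ) = (b : ℝ) - a - 1 := by
    rw [Nat.card_Icc, Nat.cast_sub (by omega)]
    push_cast; ring
  have hd : (0 : ℝ) < (b : ℝ) - a - 1 := by linarith
  have hsd : Finset.Icc 1 b \ Finset.Icc 1 (a + 1) = Finset.Icc (a + 2) b := by
    ext i
    simp only [Finset.mem_sdiff, Finset.mem_Icc]
    omega
  have hsub : Finset.Icc 1 (a + 1) ⊆ Finset.Icc 1 b :=
    Finset.Icc_subset_Icc_right (by omega)
  have hsum : ∑ i ∈ Finset.Icc (a + 2) b, g i =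
      (∑ i ∈ Finset.Icc 1 b, g i) - ∑ i ∈ Finset.Icc 1 (a + 1), g i := by
    rw [← hsd, Finset.sum_sdiff_eq_sub hsub]
  have hb := hCA b
  have ha := hCA (a + 1)
  push_cast at ha
  rw [hcard, hsum]
  have hrw : ((∑ i ∈ Finset.Icc 1 b, g i) - ∑ i ∈ Finset.Icc 1 (a + 1), g i) /
      ((b : ℝ) - a - 1) - m =
      (((∑ i ∈ Finset.Icc 1 b, g i) - (b : ℝ) * m) -
        ((∑ i ∈ Finset.Icc 1 (a + 1), g i) - ((a : ℝ) + 1) * m)) / ((b : ℝ) - a - 1) := by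
    field_simp
    ring
  rw [hrw, abs_div, abs_of_pos hd, div_lt_iff₀ hd]
  set X := (∑ i ∈ Finset.Icc 1 b, g i) - (b : ℝ) * m with hX
  set Y := (∑ i ∈ Finset.Icc 1 (a + 1), g i) - ((a : ℝ) + 1) * m with hY
  have htri : |X - Y| ≤ |X| + |Y| := by
    rw [sub_eq_add_neg]
    exact (abs_add_le _ _).trans (by rw [abs_neg])
  have hm1 : ε₁ * ((a : ℝ) + 1) ≤ ε₁ * (b : ℝ) :=
    mul_le_mul_of_nonneg_left (by linarith) hε₁.le
  have s1 : |X - Y| ≤ 2 * ε₁ * (b : ℝ) + 2 * C3 := by linarith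
  have s2 : μ * (2 * ε₁ * (b : ℝ)) ≤ 4 * ε₁ * ((n : ℝ) * T) + 4 * ε₁ * C1 := by
    nlinarith [mul_le_mul_of_nonneg_left hup (by positivity : (0 : ℝ) ≤ 2 * ε₁)]
  have s3 : ε * ((n : ℝ) * h) / 4 ≤ ε * (μ * ((b : ℝ) - a - 1)) := by
    nlinarith [mul_le_mul_of_nonneg_left hlow hε.le]
  have hid : 4 * ε₁ * ((n : ℝ) * T) = ε * ((n : ℝ) * h) / 8 := by
    rw [hε₁def]; field_simp; ring
  have hεh : (0 : ℝ) < ε * h := by positivity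
  have hX8 : 4 * ε₁ * C1 + 2 * μ * C3 < (n : ℝ) * (ε * h) / 8 := by
    have h1 : (4 * ε₁ * C1 + 2 * μ * C3) * (8 / (ε * h)) < (n : ℝ) := by
      have h2 : (n₁ : ℝ) ≤ n := Nat.cast_le.mpr hn
      linarith
    have h3 : (4 * ε₁ * C1 + 2 * μ * C3) * (8 / (ε * h)) * (ε * h) <
        (n : ℝ) * (ε * h) := mul_lt_mul_of_pos_right h1 hεh
    have h4 : (4 * ε₁ * C1 + 2 * μ * C3) * (8 / (ε * h)) * (ε * h) =
        (4 * ε₁ * C1 + 2 * μ * C3) * 8 := by field_simp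
    linarith
  have s4 : μ * |X - Y| < μ * (ε * ((b : ℝ) - a - 1)) := by
    have h5 : μ * |X - Y| ≤ μ * (2 * ε₁ * (b : ℝ) + 2 * C3) :=
      mul_le_mul_of_nonneg_left s1 hμ.le
    nlinarith [s2, s3, hid, hX8]
  have := (mul_lt_mul_iff_right₀ hμ).mp s4
  linarith

end Window

lemma sum_sq_expand (s : Finset ℕ) (f : ℕ → ℝ) (c : ℝ) :
    ∑ i ∈ s, (f i - c) ^ 2 =
      (∑ i ∈ s, f i ^ 2) - 2 * c * (∑ i ∈ s, f i) + (s.card : ℝ) * c ^ 2 := by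
  have h : ∀ i ∈ s, (f i - c) ^ 2 = f i ^ 2 - 2 * c * f i + c ^ 2 := fun i _ => by ring
  rw [Finset.sum_congr rfl h, Finset.sum_add_distrib, Finset.sum_sub_distrib,
    ← Finset.mul_sum, Finset.sum_const, nsmul_eq_mul]

lemma sum_quart_expand (s : Finset ℕ) (f : ℕ → ℝ) (c : ℝ) :
    ∑ i ∈ s, (f i - c) ^ 4 =
      (∑ i ∈ s, f i ^ 4) - 4 * c * (∑ i ∈ s, f i ^ 3) + 6 * c ^ 2 * (∑ i ∈ s, f i ^ 2)
        - 4 * c ^ 3 * (∑ i ∈ s, f i) + (s.card : ℝ) * c ^ 4 := by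
  have h : ∀ i ∈ s, (f i - c) ^ 4 =
      f i ^ 4 - 4 * c * f i ^ 3 + 6 * c ^ 2 * f i ^ 2 - 4 * c ^ 3 * f i + c ^ 4 :=
    fun i _ => by ring
  rw [Finset.sum_congr rfl h]
  simp only [Finset.sum_add_distrib, Finset.sum_sub_distrib, ← Finset.mul_sum,
    Finset.sum_const, nsmul_eq_mul]

lemma nuHat_eq (ξ : ℕ → Ω → ℝ) (T : ℝ) (n : ℕ) (ω : Ω) (s : Finset ℕ)
    (hs : 0 < s.card) :
    nuHatSqOn ξ T n s ω =
      (∑ i ∈ s, ξ i ω ^ 4) / (s.card : ℝ)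
        - 4 * muHatGlobal ξ T n ω * ((∑ i ∈ s, ξ i ω ^ 3) / (s.card : ℝ))
        + 6 * muHatGlobal ξ T n ω ^ 2 * ((∑ i ∈ s, ξ i ω ^ 2) / (s.card : ℝ))
        - 4 * muHatGlobal ξ T n ω ^ 3 * ((∑ i ∈ s, ξ i ω ^ 1) / (s.card : ℝ))
        + muHatGlobal ξ T n ω ^ 4
        - ((∑ i ∈ s, ξ i ω ^ 2) / (s.card : ℝ)
            - 2 * muHatGlobal ξ T n ω * ((∑ i ∈ s, ξ i ω ^ 1) / (s.card : ℝ))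
            + muHatGlobal ξ T n ω ^ 2) ^ 2 := by
  set c := muHatGlobal ξ T n ω with hc
  have hd0 : (0 : ℝ) < (s.card : ℝ) := by exact_mod_cast hs
  have hd : ((s.card : ℝ)) ≠ 0 := hd0.ne'
  unfold nuHatSqOn sigmaHatSqOn Vhat
  rw [← hc]
  have hv : ∀ i ∈ s, ((ξ i ω - c) ^ 2 - (∑ j ∈ s, (ξ j ω - c) ^ 2) / (s.card : ℝ)) ^ 2 =
      (ξ i ω - c) ^ 4
        - 2 * ((∑ j ∈ s, (ξ j ω - c) ^ 2) / (s.card : ℝ)) * (ξ i ω - c) ^ 2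
        + ((∑ j ∈ s, (ξ j ω - c) ^ 2) / (s.card : ℝ)) ^ 2 := fun i _ => by ring
  rw [Finset.sum_congr rfl hv]
  simp only [Finset.sum_add_distrib, Finset.sum_sub_distrib, ← Finset.mul_sum,
    Finset.sum_const, nsmul_eq_mul]
  rw [sum_quart_expand, sum_sq_expand]
  have h1 : ∑ i ∈ s, ξ i ω = ∑ i ∈ s, ξ i ω ^ 1 := by simp
  rw [h1]
  field_simp
  ring

set_option maxHeartbeats 1000000 in
lemma det_master (ξ : ℕ → Ω → ℝ) (ω : Ω) (T h μ m1 m2 m3 m4 ν2 : ℝ)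
    (hμ : 0 < μ) (hT : 0 < T) (hh : 0 < h) (hhT : h ≤ T / 2)
    (hm1 : m1 = μ)
    (hA1 : Tendsto (fun k : ℕ => (∑ i ∈ Finset.Icc 1 k, ξ i ω ^ 1) / (k : ℝ)) atTop (𝓝 m1))
    (hA2 : Tendsto (fun k : ℕ => (∑ i ∈ Finset.Icc 1 k, ξ i ω ^ 2) / (k : ℝ)) atTop (𝓝 m2))
    (hA3 : Tendsto (fun k : ℕ => (∑ i ∈ Finset.Icc 1 k, ξ i ω ^ 3) / (k : ℝ)) atTop (𝓝 m3))
    (hA4 : Tendsto (fun k : ℕ => (∑ i ∈ Finset.Icc 1 k, ξ i ω ^ 4) / (k : ℝ)) atTop (𝓝 m4))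
    (hν2 : ν2 = m4 - 4 * μ * m3 + 6 * μ ^ 2 * m2 - 4 * μ ^ 3 * m1 + μ ^ 4
      - (m2 - 2 * μ * m1 + μ ^ 2) ^ 2) :
    TendstoUniformlyOn
      (fun (n : ℕ) (u : ℝ) => nuHatSqOn ξ T n
        (Finset.Icc (cnt ξ ((n : ℝ) * u) ω + 2) (cnt ξ ((n : ℝ) * (u + h)) ω)) ω)
      (fun _ => ν2) atTop (Set.Icc 0 (T - h)) := by
  have hS : Tendsto (fun k : ℕ => pSum ξ k ω / (k : ℝ)) atTop (𝓝 μ) := by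
    have heq : (fun k : ℕ => pSum ξ k ω / (k : ℝ)) =
        fun k : ℕ => (∑ i ∈ Finset.Icc 1 k, ξ i ω ^ 1) / (k : ℝ) := by
      funext k; simp [pSum]
    rw [heq, ← hm1]
    exact hA1
  have hmu : Tendsto (fun n : ℕ => muHatGlobal ξ T n ω) atTop (𝓝 μ) := by
    have h1 := hS.comp (cnt_tendsto ξ ω hS hμ hT)
    simpa [muHatGlobal, muHat, Function.comp_def] using h1
  rw [Metric.tendstoUniformlyOn_iff]
  intro ε hε
  have hGc : Continuous (fun q : ℝ × ℝ × ℝ × ℝ × ℝ =>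
      q.2.2.2.2 - 4 * q.1 * q.2.2.2.1 + 6 * q.1 ^ 2 * q.2.2.1 - 4 * q.1 ^ 3 * q.2.1
        + q.1 ^ 4 - (q.2.2.1 - 2 * q.1 * q.2.1 + q.1 ^ 2) ^ 2) := by fun_prop
  obtain ⟨δ, hδ, hball⟩ := Metric.continuousAt_iff.mp
    (hGc.continuousAt (x := ((μ, m1, m2, m3, m4) : ℝ × ℝ × ℝ × ℝ × ℝ))) ε hε
  have hW1 := wavg_unif ξ ω hS hμ hT hh hhT (fun i => ξ i ω ^ 1) m1 hA1 hδ
  have hW2 := wavg_unif ξ ω hS hμ hT hh hhT (fun i => ξ i ω ^ 2) m2 hA2 hδ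
  have hW3 := wavg_unif ξ ω hS hμ hT hh hhT (fun i => ξ i ω ^ 3) m3 hA3 hδ
  have hW4 := wavg_unif ξ ω hS hμ hT hh hhT (fun i => ξ i ω ^ 4) m4 hA4 hδ
  obtain ⟨C1, hC1, hwin⟩ := window_bounds ξ ω hS hμ hT hh hhT
  have hc : ∀ᶠ n : ℕ in atTop, dist (muHatGlobal ξ T n ω) μ < δ :=
    Metric.tendsto_nhds.mp hmu δ hδ
  filter_upwards [hW1, hW2, hW3, hW4, hwin, hc] with n e1 e2 e3 e4 ewin ec
  intro u hu
  have hcard : 0 < (Finset.Icc (cnt ξ ((n : ℝ) * u) ω + 2)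
      (cnt ξ ((n : ℝ) * (u + h)) ω)).card := by
    have := (ewin u hu).1
    rw [Nat.card_Icc]
    omega
  rw [nuHat_eq ξ T n ω _ hcard]
  have hdist : dist ((muHatGlobal ξ T n ω,
      (∑ i ∈ Finset.Icc (cnt ξ ((n : ℝ) * u) ω + 2) (cnt ξ ((n : ℝ) * (u + h)) ω), ξ i ω ^ 1) /
        ((Finset.Icc (cnt ξ ((n : ℝ) * u) ω + 2) (cnt ξ ((n : ℝ) * (u + h)) ω)).card : ℝ),
      (∑ i ∈ Finset.Icc (cnt ξ ((n : ℝ) * u) ω + 2) (cnt ξ ((n : ℝ) * (u + h)) ω), ξ i ω ^ 2) /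
        ((Finset.Icc (cnt ξ ((n : ℝ) * u) ω + 2) (cnt ξ ((n : ℝ) * (u + h)) ω)).card : ℝ),
      (∑ i ∈ Finset.Icc (cnt ξ ((n : ℝ) * u) ω + 2) (cnt ξ ((n : ℝ) * (u + h)) ω), ξ i ω ^ 3) /
        ((Finset.Icc (cnt ξ ((n : ℝ) * u) ω + 2) (cnt ξ ((n : ℝ) * (u + h)) ω)).card : ℝ),
      (∑ i ∈ Finset.Icc (cnt ξ ((n : ℝ) * u) ω + 2) (cnt ξ ((n : ℝ) * (u + h)) ω), ξ i ω ^ 4) /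
        ((Finset.Icc (cnt ξ ((n : ℝ) * u) ω + 2) (cnt ξ ((n : ℝ) * (u + h)) ω)).card : ℝ)) :
        ℝ × ℝ × ℝ × ℝ × ℝ)
      ((μ, m1, m2, m3, m4) : ℝ × ℝ × ℝ × ℝ × ℝ) < δ := by
    simp only [Prod.dist_eq]
    refine max_lt ec (max_lt ?_ (max_lt ?_ (max_lt ?_ ?_)))
    · rw [Real.dist_eq]; exact e1 u hu
    · rw [Real.dist_eq]; exact e2 u hu
    · rw [Real.dist_eq]; exact e3 u hu
    · rw [Real.dist_eq]; exact e4 u hu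
  have h5 := hball hdist
  simp only at h5
  rw [← hν2] at h5
  rw [dist_comm] at h5
  exact h5

end Aux

/-- almost surely, `sup_{t ∈ [h,T−h]} |ν̂²_ri − ν²| → 0` and
`sup_{t ∈ [h,T−h]} |ν̂²_le − ν²| → 0` as `n → ∞` (stated as a.s. uniform convergence
on `[h, T−h]`). -/
theorem nuHatSq_tendstoUniformlyOn_ae
    {Ω : Type*} [MeasurableSpace Ω] (P : Measure Ω) [IsProbabilityMeasure P]
    (ξ : ℕ → Ω → ℝ) (hmeas : ∀ i, Measurable (ξ i))
    (hindep : iIndepFun ξ P)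
    (hident : ∀ i, IdentDistrib (ξ i) (ξ 1) P P)
    (hpos : ∀ i, ∀ᵐ ω ∂P, 0 < ξ i ω)
    (hL4 : MemLp (ξ 1) 4 P)
    (μ : ℝ) (hμ : μ = ∫ ω, ξ 1 ω ∂P) (hμpos : 0 < μ)
    (ν2 : ℝ) (hν2 : ν2 = variance (fun ω => (ξ 1 ω - μ) ^ 2) P)
    (T h : ℝ) (hT : 0 < T) (hh : 0 < h) (hhT : h ≤ T / 2) :
    ∀ᵐ ω ∂P,
      TendstoUniformlyOn (fun (n : ℕ) (t : ℝ) => nuHatSqOn ξ T n (Iri ξ n h t ω) ω)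
        (fun _ => ν2) atTop (Set.Icc h (T - h)) ∧
      TendstoUniformlyOn (fun (n : ℕ) (t : ℝ) => nuHatSqOn ξ T n (Ile ξ n h t ω) ω)
        (fun _ => ν2) atTop (Set.Icc h (T - h)) := by
  -- integrability of powers of ξ 1
  have h4int : Integrable (fun ω => |ξ 1 ω| ^ (4 : ℕ)) P := by
    have h0 := hL4.integrable_norm_rpow (by norm_num) (by norm_num)
    have heq : (fun x => ‖ξ 1 x‖ ^ (4 : ENNReal).toReal) = fun x => |ξ 1 x| ^ (4 : ℕ) := by
      funext x
      rw [Real.norm_eq_abs, ← Real.rpow_natCast]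
      norm_num
    rwa [heq] at h0
  have hip : ∀ p : ℕ, p ≤ 4 → Integrable (fun ω => ξ 1 ω ^ p) P := by
    intro p hp
    refine (h4int.add (integrable_const 1)).mono'
      (((hmeas 1).pow_const p).aestronglyMeasurable)
      (Filter.Eventually.of_forall fun ω => ?_)
    simp only [Pi.add_apply]
    rw [Real.norm_eq_abs, abs_pow]
    rcases le_or_gt (|ξ 1 ω|) 1 with hle | hlt
    · have h1 : |ξ 1 ω| ^ p ≤ 1 := pow_le_one₀ (abs_nonneg _) hle
      have h2 : (0 : ℝ) ≤ |ξ 1 ω| ^ (4 : ℕ) := by positivity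
      linarith
    · have h1 : |ξ 1 ω| ^ p ≤ |ξ 1 ω| ^ (4 : ℕ) := pow_le_pow_right₀ hlt.le hp
      linarith
  have i1 := hip 1 (by norm_num)
  have i2 := hip 2 (by norm_num)
  have i3 := hip 3 (by norm_num)
  have i4 := hip 4 (by norm_num)
  -- strong law for powers
  have slln : ∀ p : ℕ, p ≤ 4 → ∀ᵐ ω ∂P,
      Tendsto (fun k : ℕ => (∑ i ∈ Finset.Icc 1 k, ξ i ω ^ p) / (k : ℝ)) atTop
        (𝓝 (∫ ω, ξ 1 ω ^ p ∂P)) := by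
    intro p hp
    have hindepX : Pairwise (Function.onFun (IndepFun · · P) fun i ω => ξ (i + 1) ω ^ p) := by
      intro i j hij
      exact (hindep.indepFun (show i + 1 ≠ j + 1 by omega)).comp
        (measurable_id.pow_const p) (measurable_id.pow_const p)
    have hidentX : ∀ i, IdentDistrib (fun ω => ξ (i + 1) ω ^ p)
        (fun ω => ξ (0 + 1) ω ^ p) P P := fun i =>
      ((hident (i + 1)).trans (hident 1).symm).comp (measurable_id.pow_const p)
    have h0 := strong_law_ae_real (fun i ω => ξ (i + 1) ω ^ p) (hip p hp) hindepX hidentX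
    filter_upwards [h0] with ω hω
    have heq : (fun k : ℕ => (∑ i ∈ Finset.range k, ξ (i + 1) ω ^ p) / (k : ℝ)) =
        fun k : ℕ => (∑ i ∈ Finset.Icc 1 k, ξ i ω ^ p) / (k : ℝ) := by
      funext k
      rw [sum_shift (fun i => ξ i ω ^ p)]
    rw [← heq]
    exact hω
  -- moments
  set m1 := ∫ ω, ξ 1 ω ^ 1 ∂P with hm1def
  set m2 := ∫ ω, ξ 1 ω ^ 2 ∂P with hm2def
  set m3 := ∫ ω, ξ 1 ω ^ 3 ∂P with hm3def
  set m4 := ∫ ω, ξ 1 ω ^ 4 ∂P with hm4def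
  have hm1 : m1 = μ := by
    rw [hm1def, hμ]
    simp [pow_one]
  -- expansion of centered moments
  have e2 : (∫ ω, (ξ 1 ω - μ) ^ 2 ∂P) = m2 - 2 * μ * m1 + μ ^ 2 := by
    have heq : ∀ x : ℝ, (x - μ) ^ 2 = x ^ 2 - 2 * μ * x ^ 1 + μ ^ 2 := fun x => by ring
    simp only [heq]
    have j2 : Integrable (fun ω => ξ 1 ω ^ 2 - 2 * μ * ξ 1 ω ^ 1) P :=
      i2.sub (i1.const_mul (2 * μ))
    rw [integral_add j2 (integrable_const _),
      integral_sub i2 (i1.const_mul (2 * μ)), integral_const_mul, integral_const]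
    simp [hm1def, hm2def]
  have e4 : (∫ ω, (ξ 1 ω - μ) ^ 4 ∂P) =
      m4 - 4 * μ * m3 + 6 * μ ^ 2 * m2 - 4 * μ ^ 3 * m1 + μ ^ 4 := by
    have heq : ∀ x : ℝ, (x - μ) ^ 4 = x ^ 4 - 4 * μ * x ^ 3 + 6 * μ ^ 2 * x ^ 2
        - 4 * μ ^ 3 * x ^ 1 + μ ^ 4 := fun x => by ring
    simp only [heq]
    have j41 : Integrable (fun ω => ξ 1 ω ^ 4 - 4 * μ * ξ 1 ω ^ 3) P :=
      i4.sub (i3.const_mul (4 * μ))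
    have j42 : Integrable (fun ω => ξ 1 ω ^ 4 - 4 * μ * ξ 1 ω ^ 3
        + 6 * μ ^ 2 * ξ 1 ω ^ 2) P := j41.add (i2.const_mul (6 * μ ^ 2))
    have j43 : Integrable (fun ω => ξ 1 ω ^ 4 - 4 * μ * ξ 1 ω ^ 3
        + 6 * μ ^ 2 * ξ 1 ω ^ 2 - 4 * μ ^ 3 * ξ 1 ω ^ 1) P :=
      j42.sub (i1.const_mul (4 * μ ^ 3))
    rw [integral_add j43 (integrable_const _),
      integral_sub j42 (i1.const_mul (4 * μ ^ 3)),
      integral_add j41 (i2.const_mul (6 * μ ^ 2)),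
      integral_sub i4 (i3.const_mul (4 * μ)),
      integral_const_mul, integral_const_mul, integral_const_mul, integral_const]
    simp [hm1def, hm2def, hm3def, hm4def]
  -- value of ν2
  have ie4 : Integrable (fun ω => (ξ 1 ω - μ) ^ 4) P := by
    have heq : (fun ω => (ξ 1 ω - μ) ^ 4) = fun ω =>
        ξ 1 ω ^ 4 - 4 * μ * ξ 1 ω ^ 3 + 6 * μ ^ 2 * ξ 1 ω ^ 2
          - 4 * μ ^ 3 * ξ 1 ω ^ 1 + μ ^ 4 := by
      funext x; ring
    rw [heq]
    have j43 : Integrable (fun ω => ξ 1 ω ^ 4 - 4 * μ * ξ 1 ω ^ 3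
        + 6 * μ ^ 2 * ξ 1 ω ^ 2 - 4 * μ ^ 3 * ξ 1 ω ^ 1) P :=
      ((i4.sub (i3.const_mul (4 * μ))).add (i2.const_mul (6 * μ ^ 2))).sub
        (i1.const_mul (4 * μ ^ 3))
    exact j43.add (integrable_const _)
  have hL2g : MemLp (fun ω => (ξ 1 ω - μ) ^ 2) 2 P := by
    refine (memLp_two_iff_integrable_sq
      (((hmeas 1).sub measurable_const).pow_const 2).aestronglyMeasurable).2 ?_
    have heq : (fun ω => ((ξ 1 ω - μ) ^ 2) ^ 2) = fun ω => (ξ 1 ω - μ) ^ 4 := by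
      funext x; ring
    change Integrable (fun ω => ((ξ 1 ω - μ) ^ 2) ^ 2) P
    rw [heq]
    exact ie4
  have hν2' : ν2 = m4 - 4 * μ * m3 + 6 * μ ^ 2 * m2 - 4 * μ ^ 3 * m1 + μ ^ 4
      - (m2 - 2 * μ * m1 + μ ^ 2) ^ 2 := by
    rw [hν2, variance_eq_sub hL2g]
    have heq : ∀ ω, ((fun ω => (ξ 1 ω - μ) ^ 2) ^ 2) ω = (ξ 1 ω - μ) ^ 4 := fun ω => by
      simp [Pi.pow_apply]; ring
    rw [show (P[(fun ω => (ξ 1 ω - μ) ^ 2) ^ 2]) = ∫ ω, (ξ 1 ω - μ) ^ 4 ∂P from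
      integral_congr_ae (Filter.Eventually.of_forall heq), e4, e2]
  -- positivity event
  have hx_ae : ∀ᵐ ω ∂P, ∀ i, 0 < ξ i ω := ae_all_iff.mpr hpos
  filter_upwards [hx_ae, slln 1 (by norm_num), slln 2 (by norm_num),
    slln 3 (by norm_num), slln 4 (by norm_num)] with ω h0 h1 h2 h3 h4
  have master := det_master ξ ω T h μ m1 m2 m3 m4 ν2 hμpos hT hh hhT hm1 h1 h2 h3 h4 hν2'
  constructor
  · exact master.mono (Set.Icc_subset_Icc_left hh.le)
  · rw [Metric.tendstoUniformlyOn_iff] at master ⊢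
    intro ε hε
    filter_upwards [master ε hε] with n hn
    intro t ht
    have h1 : t - h ∈ Set.Icc (0 : ℝ) (T - h) := by
      constructor
      · linarith [ht.1]
      · linarith [ht.2]
    have h2 := hn (t - h) h1
    have h3 : t - h + h = t := by ring
    rw [h3] at h2
    exact h2
end

section
/- For a renewal process with constant rate: almost surely, sup_{t ∈ [h,T−h]} |(N_{n(t+h)} − N_{nt})/(nh/μ) − 1| → 0 and sup_{t ∈ [h,T−h]} |(N_{nt} − N_{n(t−h)})/(nh/μ) − 1| → 0 as n → ∞. -/
open MeasureTheory ProbabilityTheory Filter Topology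

private lemma tendsto_S_atTop {S : ℕ → ℝ} {μ : ℝ} (hμ : 0 < μ)
    (hlim : Tendsto (fun k : ℕ => S k / k) atTop (𝓝 μ)) : Tendsto S atTop atTop := by
  have h1 : ∀ᶠ k : ℕ in atTop, μ / 2 ≤ S k / k :=
    hlim.eventually (eventually_ge_nhds (by linarith))
  have h2 : Tendsto (fun k : ℕ => μ / 2 * k) atTop atTop :=
    (tendsto_natCast_atTop_atTop).const_mul_atTop (by linarith)
  apply tendsto_atTop_mono' atTop ?_ h2
  filter_upwards [h1, eventually_ge_atTop 1] with k hk hk1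
  have hk0 : (0:ℝ) < k := by exact_mod_cast hk1
  calc μ/2 * k ≤ S k / k * k := by nlinarith
  _ = S k := by field_simp

private lemma cntS_aux {S : ℕ → ℝ} (h0 : S 0 = 0)
    (htop : Tendsto S atTop atTop) {x : ℝ} (hx : 0 ≤ x) :
    S (sSup {k : ℕ | S k ≤ x}) ≤ x ∧ x < S (sSup {k : ℕ | S k ≤ x} + 1) ∧
      ∀ k, S k ≤ x → k ≤ sSup {k : ℕ | S k ≤ x} := by
  obtain ⟨N, hN⟩ := (htop.eventually_gt_atTop x).exists_forall_of_atTop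
  have hbdd : BddAbove {k : ℕ | S k ≤ x} := by
    refine ⟨N, fun k hk => ?_⟩
    by_contra hc
    exact absurd hk (hN k (le_of_not_ge hc)).not_ge
  have hne : {k : ℕ | S k ≤ x}.Nonempty := ⟨0, by simpa [h0]⟩
  have hmem : sSup {k : ℕ | S k ≤ x} ∈ {k : ℕ | S k ≤ x} := Nat.sSup_mem hne hbdd
  refine ⟨hmem, ?_, fun k hk => le_csSup hbdd hk⟩
  by_contra hc
  have := le_csSup hbdd (show sSup {k : ℕ | S k ≤ x} + 1 ∈ {k : ℕ | S k ≤ x} from not_lt.1 hc)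
  omega

private lemma cntS_mono {S : ℕ → ℝ} (h0 : S 0 = 0)
    (htop : Tendsto S atTop atTop) {x y : ℝ} (hx : 0 ≤ x) (hxy : x ≤ y) :
    sSup {k : ℕ | S k ≤ x} ≤ sSup {k : ℕ | S k ≤ y} :=
  (cntS_aux h0 htop (hx.trans hxy)).2.2 _ ((cntS_aux h0 htop hx).1.trans hxy)

private lemma cntS_pointwise {S : ℕ → ℝ} {μ : ℝ} (h0 : S 0 = 0) (hm : StrictMono S)
    (hμ : 0 < μ) (hlim : Tendsto (fun k : ℕ => S k / k) atTop (𝓝 μ)) {t : ℝ} (ht : 0 ≤ t) :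
    Tendsto (fun n : ℕ => ((sSup {k : ℕ | S k ≤ (n : ℝ) * t} : ℕ) : ℝ) / n) atTop (𝓝 (t / μ)) := by
  have htop := tendsto_S_atTop hμ hlim
  rcases eq_or_lt_of_le ht with h | ht
  · have hset : ∀ n : ℕ, {k : ℕ | S k ≤ (n : ℝ) * t} = ({0} : Set ℕ) := by
      intro n
      ext k
      simp only [Set.mem_setOf_eq, Set.mem_singleton_iff, ← h, mul_zero]
      constructor
      · intro hk
        by_contra hk0
        have : S 0 < S k := hm (Nat.pos_of_ne_zero hk0)
        rw [h0] at this; linarith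
      · rintro rfl; rw [h0]
    have heq : (fun n : ℕ => ((sSup {k : ℕ | S k ≤ (n : ℝ) * t} : ℕ) : ℝ) / n) = fun _ => 0 := by
      funext n; rw [hset n]; simp
    rw [heq, ← h]
    simpa using tendsto_const_nhds
  set N : ℕ → ℕ := fun n => sSup {k : ℕ | S k ≤ (n : ℝ) * t} with hNdef
  have hnt : Tendsto (fun n : ℕ => (n : ℝ) * t) atTop atTop :=
    (tendsto_natCast_atTop_atTop).atTop_mul_const ht
  have hNtop : Tendsto N atTop atTop := by
    rw [tendsto_atTop]
    intro b
    filter_upwards [hnt.eventually_ge_atTop (S b), hnt.eventually_ge_atTop 0] with n hn hn0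
    exact (cntS_aux h0 htop hn0).2.2 b hn
  have hN1 : ∀ᶠ n : ℕ in atTop, 1 ≤ N n := hNtop.eventually_ge_atTop 1
  have hr : Tendsto (fun n : ℕ => (n : ℝ) * t / N n) atTop (𝓝 μ) := by
    have hlow : Tendsto (fun n : ℕ => S (N n) / (N n)) atTop (𝓝 μ) := hlim.comp hNtop
    have hNtop1 : Tendsto (fun n : ℕ => N n + 1) atTop atTop :=
      (tendsto_add_atTop_nat 1).comp hNtop
    have hup1 : Tendsto (fun n : ℕ => S (N n + 1) / ((N n + 1 : ℕ) : ℝ)) atTop (𝓝 μ) :=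
      hlim.comp hNtop1
    have hinv : Tendsto (fun n : ℕ => ((N n : ℝ))⁻¹) atTop (𝓝 0) :=
      tendsto_inv_atTop_zero.comp (tendsto_natCast_atTop_atTop.comp hNtop)
    have hfrac : Tendsto (fun n : ℕ => ((N n : ℝ) + 1) / N n) atTop (𝓝 1) := by
      have : Tendsto (fun n : ℕ => 1 + ((N n : ℝ))⁻¹) atTop (𝓝 (1 + 0)) :=
        tendsto_const_nhds.add hinv
      rw [add_zero] at this
      apply this.congr'
      filter_upwards [hN1] with n hn
      have hN0 : (0:ℝ) < N n := by exact_mod_cast hn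
      field_simp
    have hup : Tendsto (fun n : ℕ => S (N n + 1) / ((N n + 1 : ℕ) : ℝ) * (((N n : ℝ) + 1) / N n))
        atTop (𝓝 μ) := by
      have := hup1.mul hfrac
      rwa [mul_one] at this
    refine tendsto_of_tendsto_of_tendsto_of_le_of_le' hlow hup ?_ ?_
    · filter_upwards [hN1, hnt.eventually_ge_atTop 0] with n hn hn0
      have hN0 : (0:ℝ) < N n := by exact_mod_cast hn
      exact (div_le_div_iff_of_pos_right hN0).2 (cntS_aux h0 htop hn0).1
    · filter_upwards [hN1, hnt.eventually_ge_atTop 0] with n hn hn0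
      have hN0 : (0:ℝ) < N n := by exact_mod_cast hn
      have hlt : (n : ℝ) * t ≤ S (N n + 1) := ((cntS_aux h0 htop hn0).2.1).le
      have : (n : ℝ) * t / N n ≤ S (N n + 1) / N n := (div_le_div_iff_of_pos_right hN0).2 hlt
      calc (n : ℝ) * t / N n ≤ S (N n + 1) / N n := this
      _ = S (N n + 1) / ((N n + 1 : ℕ) : ℝ) * (((N n : ℝ) + 1) / N n) := by
          have h1 : ((N n + 1 : ℕ) : ℝ) = (N n : ℝ) + 1 := by push_cast; ring
          rw [h1]
          have h2 : ((N n : ℝ) + 1) ≠ 0 := by positivity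
          field_simp
  have hfin : Tendsto (fun n : ℕ => t / ((n : ℝ) * t / N n)) atTop (𝓝 (t / μ)) :=
    tendsto_const_nhds.div hr hμ.ne'
  apply hfin.congr'
  filter_upwards [hN1, eventually_ge_atTop 1] with n hn hn1
  have hN0 : (N n : ℝ) ≠ 0 := by positivity
  have hn0 : (n : ℝ) ≠ 0 := by
    have : (0:ℝ) < n := by exact_mod_cast hn1
    linarith
  field_simp
  simp only [hNdef, mul_comm t]

set_option maxHeartbeats 1000000 in
private lemma cntS_unif {S : ℕ → ℝ} {μ : ℝ} (h0 : S 0 = 0) (hm : StrictMono S)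
    (hμ : 0 < μ) (hlim : Tendsto (fun k : ℕ => S k / k) atTop (𝓝 μ)) {T : ℝ} (hT : 0 < T) :
    TendstoUniformlyOn
      (fun (n : ℕ) (t : ℝ) => ((sSup {k : ℕ | S k ≤ (n : ℝ) * t} : ℕ) : ℝ) / n)
      (fun t => t / μ) atTop (Set.Icc 0 T) := by
  have htop := tendsto_S_atTop hμ hlim
  rw [Metric.tendstoUniformlyOn_iff]
  intro ε hε
  obtain ⟨m, hmgt⟩ := exists_nat_gt (T / (ε * μ / 4))
  have hpos4 : 0 < T / (ε * μ / 4) := by positivity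
  have hm1 : 1 ≤ m := by
    by_contra hc
    push_neg at hc
    interval_cases m
    · simp at hmgt; linarith
  have hm0 : (0:ℝ) < m := by exact_mod_cast hm1
  set δ := T / m with hδdef
  have hδpos : 0 < δ := by positivity
  have hδ : δ < ε * μ / 4 := by
    rw [hδdef, div_lt_iff₀ hm0]
    rw [div_lt_iff₀ (by positivity : (0:ℝ) < ε * μ / 4)] at hmgt
    linarith
  have hδμ : δ / μ < ε / 4 := by
    rw [div_lt_iff₀ hμ]
    linarith
  have hgrid : ∀ᶠ n : ℕ in atTop, ∀ j ∈ Finset.range (m + 1),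
      |((sSup {k : ℕ | S k ≤ (n : ℝ) * ((j : ℝ) * δ)} : ℕ) : ℝ) / n - (j : ℝ) * δ / μ|
        < ε / 2 := by
    rw [eventually_all_finset]
    intro j _
    have hp := cntS_pointwise h0 hm hμ hlim (show (0:ℝ) ≤ (j : ℝ) * δ by positivity)
    have := hp (Metric.ball_mem_nhds _ (show (0:ℝ) < ε/2 by linarith))
    filter_upwards [this] with n hn
    simp only [Set.mem_preimage, Metric.mem_ball, Real.dist_eq] at hn
    exact hn
  filter_upwards [hgrid, eventually_ge_atTop 1] with n hn hn1
  intro t ht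
  obtain ⟨ht0, htT⟩ := ht
  have hn0 : (0:ℝ) < n := by exact_mod_cast hn1
  set F : ℝ → ℝ := fun s => ((sSup {k : ℕ | S k ≤ (n : ℝ) * s} : ℕ) : ℝ) / n with hFdef
  have hmono : ∀ {x y : ℝ}, 0 ≤ x → x ≤ y → F x ≤ F y := by
    intro x y hx hxy
    have hcnt : sSup {k : ℕ | S k ≤ (n : ℝ) * x} ≤ sSup {k : ℕ | S k ≤ (n : ℝ) * y} :=
      cntS_mono h0 htop (mul_nonneg hn0.le hx) (mul_le_mul_of_nonneg_left hxy hn0.le)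
    have : ((sSup {k : ℕ | S k ≤ (n : ℝ) * x} : ℕ) : ℝ) ≤
        ((sSup {k : ℕ | S k ≤ (n : ℝ) * y} : ℕ) : ℝ) := by exact_mod_cast hcnt
    exact div_le_div_of_nonneg_right this hn0.le
  set j : ℕ := min (Nat.floor (t / δ)) (m - 1) with hjdef
  have hjm : j + 1 ≤ m := by
    have := min_le_right (Nat.floor (t / δ)) (m - 1)
    omega
  have hjle : (j : ℝ) * δ ≤ t := by
    rw [← le_div_iff₀ hδpos]
    calc (j : ℝ) ≤ (Nat.floor (t / δ) : ℝ) := by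
          exact_mod_cast min_le_left (Nat.floor (t / δ)) (m - 1)
    _ ≤ t / δ := Nat.floor_le (by positivity)
  have hjge : t ≤ ((j : ℝ) + 1) * δ := by
    rcases le_or_gt (Nat.floor (t / δ)) (m - 1) with hc | hc
    · have hj : j = Nat.floor (t / δ) := min_eq_left hc
      have : t / δ < (Nat.floor (t / δ) : ℝ) + 1 := Nat.lt_floor_add_one _
      rw [hj]
      rw [← div_le_iff₀ hδpos]
      exact this.le
    · have hj : j = m - 1 := min_eq_right hc.le
      have hjc : (j : ℝ) + 1 = m := by
        rw [hj]
        have : (m - 1 : ℕ) + 1 = m := Nat.succ_pred_eq_of_pos hm1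
        exact_mod_cast congrArg (Nat.cast : ℕ → ℝ) this
      rw [hjc, hδdef]
      field_simp
      linarith
  have hg1 : |F ((j : ℝ) * δ) - (j : ℝ) * δ / μ| < ε / 2 :=
    hn j (Finset.mem_range.2 (by omega))
  have hg2 : |F (((j : ℝ) + 1) * δ) - ((j : ℝ) + 1) * δ / μ| < ε / 2 := by
    have h2 := hn (j + 1) (Finset.mem_range.2 (by omega))
    push_cast at h2
    exact h2
  rw [abs_sub_lt_iff] at hg1 hg2
  have hup : F t ≤ F (((j : ℝ) + 1) * δ) := hmono ht0 hjge
  have hlow : F ((j : ℝ) * δ) ≤ F t := hmono (by positivity) hjle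
  have hub : ((j : ℝ) + 1) * δ / μ ≤ t / μ + δ / μ := by
    rw [← add_div]
    apply div_le_div_of_nonneg_right ?_ hμ.le
    nlinarith
  have hlb : t / μ - δ / μ ≤ (j : ℝ) * δ / μ := by
    rw [div_sub_div_same]
    apply div_le_div_of_nonneg_right ?_ hμ.le
    nlinarith
  rw [Real.dist_eq, abs_sub_lt_iff]
  exact ⟨by linarith [hg1.1, hg1.2, hg2.1, hg2.2], by linarith [hg1.1, hg1.2, hg2.1, hg2.2]⟩

private lemma slln_pSum {Ω : Type*} [MeasurableSpace Ω] (P : Measure Ω) [IsProbabilityMeasure P]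
    (ξ : ℕ → Ω → ℝ)
    (hindep : iIndepFun ξ P)
    (hident : ∀ i, IdentDistrib (ξ i) (ξ 1) P P)
    (hL4 : MemLp (ξ 1) 4 P) (μ : ℝ) (hμ : μ = ∫ ω, ξ 1 ω ∂P) :
    ∀ᵐ ω ∂P, Tendsto (fun k : ℕ => pSum ξ k ω / k) atTop (𝓝 μ) := by
  have hint : Integrable ((fun i => ξ (1 + i)) 0) P := by
    simpa using memLp_one_iff_integrable.1 (hL4.mono_exponent (by norm_num))
  have hpind : Pairwise (Function.onFun (IndepFun · · P) fun i => ξ (1 + i)) := by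
    intro i j hij
    exact hindep.indepFun (by omega)
  have hpid : ∀ i, IdentDistrib ((fun i => ξ (1 + i)) i) ((fun i => ξ (1 + i)) 0) P P := by
    intro i; simpa using hident (1 + i)
  have hsl := strong_law_ae_real (fun i => ξ (1 + i)) hint hpind hpid
  have hmean : (P[(fun i => ξ (1 + i)) 0]) = μ := by
    simp only [Nat.add_zero]
    rw [hμ]
  rw [hmean] at hsl
  filter_upwards [hsl] with ω hω
  refine hω.congr fun k => ?_
  congr 1
  rw [pSum, ← Finset.Ico_add_one_right_eq_Icc, Finset.sum_Ico_eq_sum_range]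
  simp

private lemma window_helper {f : ℕ → ℝ → ℝ} {μ T h : ℝ} (hμ : 0 < μ) (hh : 0 < h)
    (huni : TendstoUniformlyOn f (fun t => t / μ) atTop (Set.Icc 0 T))
    (a b : ℝ → ℝ)
    (hab : ∀ t ∈ Set.Icc h (T - h),
      a t ∈ Set.Icc 0 T ∧ b t ∈ Set.Icc 0 T ∧ a t - b t = h) :
    TendstoUniformlyOn (fun n t => (f n (a t) - f n (b t)) * (μ / h)) (fun _ => 1) atTop
      (Set.Icc h (T - h)) := by
  rw [Metric.tendstoUniformlyOn_iff] at huni ⊢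
  intro ε hε
  set ε' := ε * h / (2 * μ) with hε'def
  have hε'pos : 0 < ε' := by positivity
  filter_upwards [huni ε' hε'pos] with n hn
  intro t ht
  obtain ⟨ha, hb, habh⟩ := hab t ht
  have hA := hn (a t) ha
  have hB := hn (b t) hb
  rw [Real.dist_eq] at hA hB ⊢
  have key : 1 - (f n (a t) - f n (b t)) * (μ / h) =
      ((a t / μ - f n (a t)) - (b t / μ - f n (b t))) * (μ / h) := by
    have hba : a t = b t + h := by linarith
    rw [hba]
    field_simp
    ring
  rw [key, abs_mul]
  have h1 : |(a t / μ - f n (a t)) - (b t / μ - f n (b t))| < 2 * ε' := by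
    calc |(a t / μ - f n (a t)) - (b t / μ - f n (b t))|
        ≤ |a t / μ - f n (a t)| + |b t / μ - f n (b t)| := abs_sub _ _
    _ < 2 * ε' := by linarith
  have h2 : |μ / h| = μ / h := abs_of_pos (by positivity)
  rw [h2]
  calc |(a t / μ - f n (a t)) - (b t / μ - f n (b t))| * (μ / h)
      < 2 * ε' * (μ / h) := mul_lt_mul_of_pos_right h1 (by positivity)
  _ = ε := by rw [hε'def]; field_simp

/-- uniform law of large numbers for the number of events in sliding
windows: for a renewal process with constant rate, almost surely
`sup_{t ∈ [h,T−h]} |(N_{n(t+h)} − N_{nt})/(nh/μ) − 1| → 0` and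
`sup_{t ∈ [h,T−h]} |(N_{nt} − N_{n(t−h)})/(nh/μ) − 1| → 0` as `n → ∞`. -/
theorem window_counts_tendstoUniformlyOn_ae
    {Ω : Type*} [MeasurableSpace Ω] (P : Measure Ω) [IsProbabilityMeasure P]
    (ξ : ℕ → Ω → ℝ) (hmeas : ∀ i, Measurable (ξ i))
    (hindep : iIndepFun ξ P)
    (hident : ∀ i, IdentDistrib (ξ i) (ξ 1) P P)
    (hpos : ∀ i, ∀ᵐ ω ∂P, 0 < ξ i ω)
    (hL4 : MemLp (ξ 1) 4 P)
    (μ : ℝ) (hμ : μ = ∫ ω, ξ 1 ω ∂P) (hμpos : 0 < μ)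
    (T h : ℝ) (hT : 0 < T) (hh : 0 < h) (hhT : h ≤ T / 2) :
    ∀ᵐ ω ∂P,
      TendstoUniformlyOn
        (fun (n : ℕ) (t : ℝ) =>
          ((cnt ξ ((n : ℝ) * (t + h)) ω : ℝ) - (cnt ξ ((n : ℝ) * t) ω : ℝ))
            / ((n : ℝ) * h / μ))
        (fun _ => 1) atTop (Set.Icc h (T - h)) ∧
      TendstoUniformlyOn
        (fun (n : ℕ) (t : ℝ) =>
          ((cnt ξ ((n : ℝ) * t) ω : ℝ) - (cnt ξ ((n : ℝ) * (t - h)) ω : ℝ))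
            / ((n : ℝ) * h / μ))
        (fun _ => 1) atTop (Set.Icc h (T - h)) := by
  have hpos' : ∀ᵐ ω ∂P, ∀ i, 0 < ξ i ω := ae_all_iff.2 hpos
  filter_upwards [slln_pSum P ξ hindep hident hL4 μ hμ, hpos'] with ω hS hξ
  have h0 : pSum ξ 0 ω = 0 := by simp [pSum]
  have hmS : StrictMono (fun k => pSum ξ k ω) := by
    apply strictMono_nat_of_lt_succ
    intro k
    have hsucc : pSum ξ (k + 1) ω = pSum ξ k ω + ξ (k + 1) ω := by
      rw [pSum, pSum, Finset.sum_Icc_succ_top (Nat.succ_le_succ (Nat.zero_le k))]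
    simp only [hsucc]
    linarith [hξ (k + 1)]
  have huni : TendstoUniformlyOn
      (fun (n : ℕ) (t : ℝ) => ((cnt ξ ((n : ℝ) * t) ω : ℕ) : ℝ) / n)
      (fun t => t / μ) atTop (Set.Icc 0 T) := cntS_unif h0 hmS hμpos hS hT
  have hcongr : ∀ᶠ n : ℕ in atTop, (0 : ℝ) < (n : ℝ) := by
    filter_upwards [eventually_ge_atTop 1] with n hn
    exact_mod_cast hn
  constructor
  · have hab : ∀ t ∈ Set.Icc h (T - h),
        (t + h) ∈ Set.Icc 0 T ∧ t ∈ Set.Icc 0 T ∧ (t + h) - t = h := by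
      intro t ht
      simp only [Set.mem_Icc] at ht ⊢
      exact ⟨⟨by linarith, by linarith⟩, ⟨by linarith, by linarith⟩, by ring⟩
    have hwin := window_helper hμpos hh huni (fun t => t + h) (fun t => t) hab
    apply hwin.congr
    filter_upwards [hcongr] with n hn t ht
    have hn0 : (n : ℝ) ≠ 0 := ne_of_gt hn
    have hh0 : h ≠ 0 := ne_of_gt hh
    have hμ0 : μ ≠ 0 := ne_of_gt hμpos
    show ((cnt ξ ((n : ℝ) * (t + h)) ω : ℝ) / n - (cnt ξ ((n : ℝ) * t) ω : ℝ) / n) * (μ / h)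
        = ((cnt ξ ((n : ℝ) * (t + h)) ω : ℝ) - (cnt ξ ((n : ℝ) * t) ω : ℝ)) / ((n : ℝ) * h / μ)
    field_simp
  · have hab : ∀ t ∈ Set.Icc h (T - h),
        t ∈ Set.Icc 0 T ∧ (t - h) ∈ Set.Icc 0 T ∧ t - (t - h) = h := by
      intro t ht
      simp only [Set.mem_Icc] at ht ⊢
      exact ⟨⟨by linarith, by linarith⟩, ⟨by linarith, by linarith⟩, by ring⟩
    have hwin := window_helper hμpos hh huni (fun t => t) (fun t => t - h) hab
    apply hwin.congr
    filter_upwards [hcongr] with n hn t ht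
    have hn0 : (n : ℝ) ≠ 0 := ne_of_gt hn
    have hh0 : h ≠ 0 := ne_of_gt hh
    have hμ0 : μ ≠ 0 := ne_of_gt hμpos
    show ((cnt ξ ((n : ℝ) * t) ω : ℝ) / n - (cnt ξ ((n : ℝ) * (t - h)) ω : ℝ) / n) * (μ / h)
        = ((cnt ξ ((n : ℝ) * t) ω : ℝ) - (cnt ξ ((n : ℝ) * (t - h)) ω : ℝ)) / ((n : ℝ) * h / μ)
    field_simp
end
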